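/- arXiv:2004.04978 — 2 statements merged into one kernel-verified Lean document; each statement's English description precedes it below -/
import Mathlib

section
/- Let n ≥ 2, let δ ∈ (0, 1) be a constant, and set ζ = (1 − δ)/(4e). Consider the UMDA with parameters μ and λ optimizing LeadingOnes on {0,1}^n, where μ ≥ 4·((1 − δ)/δ²)·ln n and λ ≥ μ/ζ, and let d = ⌊log_4(ζ λ/μ)⌋. Consider an iteration t such that position i ∈ [n] is critical and such that p_j^(t) ≥ 1/4 for all positions j ≥ i. Then, with probability at least 1 − 1/n², for all positions j ∈ [min{n, i + d}], we have p_j^(t+1) = 1 − 1/n. -/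
/-!
Formalization of the UMDA (univariate marginal distribution algorithm) with parameters
`μ ≤ lam` maximizing a fitness function `f : (Fin n → Bool) → ℝ`.

The algorithm is modeled as a deterministic function of driving randomness: in each
iteration `t`, the fresh randomness `step t` consists of `lam · n` independent uniform
random numbers in `[0,1]` (the population is sampled from the current frequency vector
by thresholding these uniforms, so that each bit is `1` with probability equal to the
corresponding frequency, independently) together with an independent uniformly random
permutation of `Fin lam` that is used to break ties in the selection of the `μ` best
individuals uniformly at random.  The randomness of different iterations is independent.

Positions: we index positions by `Fin n` (0-based), so `i : Fin n` represents the
(1-based) position `i + 1 ∈ [n]` of the paper.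
-/

open MeasureTheory ProbabilityTheory
open scoped ENNReal

noncomputable section

namespace UMDA

/-- The number of leading ones of a bit string `x : Fin n → Bool`,
`LO(x) = ∑_{i=1}^n ∏_{j=1}^i x_j`. -/
def leadingOnes {n : ℕ} (x : Fin n → Bool) : ℕ :=
  (Finset.univ.filter fun i : Fin n => ∀ j : Fin n, j ≤ i → x j = true).card

/-- The `LeadingOnes` fitness function (real-valued). -/
def lo (n : ℕ) : (Fin n → Bool) → ℝ := fun x => leadingOnes x

/-- The all-ones bit string, the unique global optimum of `LeadingOnes`. -/
def allOnes (n : ℕ) : Fin n → Bool := fun _ => true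

open Classical in
/-- The population of `lam` individuals sampled from the frequency vector `p` by
thresholding the uniform random numbers `u`: bit `i` of individual `k` is `1` iff
`u k i < p i` (so it is `1` with probability `p i` for `p i ∈ [0,1]` and uniformly
distributed `u k i`). -/
def sample {n lam : ℕ} (p : Fin n → ℝ) (u : Fin lam → Fin n → ℝ) :
    Fin lam → Fin n → Bool :=
  fun k i => decide (u k i < p i)

/-- Individual (index) `j` beats individual `k` with respect to the fitness `f`:
it has strictly larger fitness, or equal fitness and a smaller rank in the
tie-breaking permutation `π`. -/
def Beats {n lam : ℕ} (f : (Fin n → Bool) → ℝ) (x : Fin lam → Fin n → Bool)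
    (π : Equiv.Perm (Fin lam)) (j k : Fin lam) : Prop :=
  f (x k) < f (x j) ∨ (f (x j) = f (x k) ∧ π j < π k)

open Classical in
/-- The indices of the `μ` best individuals of the population `x` with respect to `f`,
ties broken (uniformly at random) via the (uniformly random) permutation `π`:
an individual is selected iff fewer than `μ` individuals beat it. -/
def selected {n lam : ℕ} (f : (Fin n → Bool) → ℝ) (μ : ℕ)
    (x : Fin lam → Fin n → Bool) (π : Equiv.Perm (Fin lam)) : Finset (Fin lam) :=
  Finset.univ.filter fun k => (Finset.univ.filter fun j => Beats f x π j k).card < μ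

open Classical in
/-- The updated frequency vector: the relative number of ones at each position among the
`μ` selected individuals, clamped to the interval `[1/n, 1 - 1/n]`. -/
def update {n lam : ℕ} (f : (Fin n → Bool) → ℝ) (μ : ℕ)
    (x : Fin lam → Fin n → Bool) (π : Equiv.Perm (Fin lam)) : Fin n → ℝ :=
  fun i => max ((1 : ℝ) / n) (min (1 - (1 : ℝ) / n)
    (((((selected f μ x π).filter fun k => x k i = true)).card : ℝ) / (μ : ℝ)))

/-- The frequency vector `p^(t)` of the UMDA (with selection size `μ`, fitness `f`) at
the beginning of iteration `t`, as a deterministic function of the driving randomness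
`step`: `p^(0) = (1/2, …, 1/2)`, and `p^(t+1)` is obtained by sampling the population
of iteration `t` from `p^(t)`, selecting the `μ` best individuals (ties broken via the
permutation of `step t`) and taking the clamped relative numbers of ones. -/
def freq {n lam : ℕ} {Ω : Type*} (f : (Fin n → Bool) → ℝ) (μ : ℕ)
    (step : ℕ → Ω → (Fin lam → Fin n → ℝ) × Equiv.Perm (Fin lam)) :
    ℕ → Ω → Fin n → ℝ
  | 0 => fun _ _ => 1 / 2
  | t + 1 => fun ω =>
      update f μ (sample (freq f μ step t ω) (step t ω).1) (step t ω).2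

/-- The offspring population `x^(1), …, x^(lam)` sampled by the UMDA in iteration `t`. -/
def pop {n lam : ℕ} {Ω : Type*} (f : (Fin n → Bool) → ℝ) (μ : ℕ)
    (step : ℕ → Ω → (Fin lam → Fin n → ℝ) × Equiv.Perm (Fin lam))
    (t : ℕ) (ω : Ω) : Fin lam → Fin n → Bool :=
  sample (freq f μ step t ω) (step t ω).1

instance permMeasurableSpace (lam : ℕ) : MeasurableSpace (Equiv.Perm (Fin lam)) := ⊤

/-- The uniform distribution on `[0, 1] ⊆ ℝ`. -/
def unif01 : Measure ℝ := volume.restrict (Set.Icc 0 1)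

/-- The law of the fresh randomness used by the UMDA in a single iteration:
`lam · n` independent uniform random numbers in `[0,1]` together with an independent
uniformly random permutation of `Fin lam`. -/
def stepLaw (n lam : ℕ) :
    Measure ((Fin lam → Fin n → ℝ) × Equiv.Perm (Fin lam)) :=
  (Measure.pi fun _ : Fin lam => Measure.pi fun _ : Fin n => unif01).prod
    ((PMF.uniformOfFintype (Equiv.Perm (Fin lam))).toMeasure)

/-- A run of the UMDA with offspring population size `lam` on bit strings of length `n`,
carried by the probability space `Ω`: the driving randomness of the iterations is
independent, and in each iteration it has law `stepLaw n lam`. -/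
structure Model (n lam : ℕ) (Ω : Type*) [MeasureSpace Ω] where
  step : ℕ → Ω → (Fin lam → Fin n → ℝ) × Equiv.Perm (Fin lam)
  measurable_step : ∀ t, Measurable (step t)
  indep_step : iIndepFun step ℙ
  law_step : ∀ t, Measure.map (step t) ℙ = stepLaw n lam

/-- The fitness `f` weakly prefers a `1` at position `i`: flipping bit `i` from `0`
to `1` never decreases the fitness. -/
def WeaklyPrefersOne {n : ℕ} (f : (Fin n → Bool) → ℝ) (i : Fin n) : Prop :=
  ∀ x : Fin n → Bool, f (Function.update x i false) ≤ f (Function.update x i true)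

/-- Position `i : Fin n` (0-based, i.e., position `i + 1 ∈ [n]` of the paper) is
critical for the frequency vector `p`: all frequencies at smaller indices equal
`1 - 1/n` and the frequency at `i` is less than `1 - 1/n`. -/
def IsCritical {n : ℕ} (p : Fin n → ℝ) (i : Fin n) : Prop :=
  (∀ j : Fin n, j < i → p j = 1 - (1 : ℝ) / n) ∧ p i < 1 - (1 : ℝ) / n

/-- Position `i : Fin n` (0-based, i.e., position `i + 1 ∈ [n]` of the paper) is
selection-relevant (w.r.t. `LeadingOnes`) for the population `x`: at least `μ`
individuals have at least `(i + 1) - 1 = i` leading ones. -/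
def SelectionRelevant {n lam : ℕ} (μ : ℕ) (x : Fin lam → Fin n → Bool)
    (i : Fin n) : Prop :=
  μ ≤ (Finset.univ.filter fun k : Fin lam => (i : ℕ) ≤ leadingOnes (x k)).card

end UMDA
open UMDA
namespace UMDAProof
open Finset

open Finset in
lemma card_filter_val_lt {n : ℕ} (m : ℕ) (hm : m ≤ n) :
    (Finset.univ.filter fun i : Fin n => (i : ℕ) < m).card = m := by
  classical
  have : (Finset.univ.filter fun i : Fin n => (i : ℕ) < m) =
      (Finset.range m).attachFin (fun a ha => lt_of_lt_of_le (Finset.mem_range.mp ha) hm) := by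
    ext i
    simp [Finset.mem_attachFin]
  rw [this, Finset.card_attachFin, Finset.card_range]

open Finset in
lemma leadingOnes_ge_iff {n : ℕ} (x : Fin n → Bool) (m : ℕ) (hm : m ≤ n) :
    m ≤ leadingOnes x ↔ ∀ j : Fin n, (j : ℕ) < m → x j = true := by
  classical
  unfold leadingOnes
  constructor
  · intro h j hj
    by_contra hx
    have hsub : (Finset.univ.filter fun i : Fin n => ∀ j : Fin n, j ≤ i → x j = true) ⊆
        Finset.univ.filter fun i : Fin n => (i : ℕ) < (j : ℕ) := by
      intro a ha
      simp only [Finset.mem_filter, Finset.mem_univ, true_and] at ha ⊢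
      by_contra hja
      exact hx (ha j (Fin.le_def.mpr (le_of_not_gt hja)))
    have := Finset.card_le_card hsub
    rw [card_filter_val_lt _ (le_of_lt j.isLt)] at this
    omega
  · intro h
    have hsub : (Finset.univ.filter fun i : Fin n => (i : ℕ) < m) ⊆
        Finset.univ.filter fun i : Fin n => ∀ j : Fin n, j ≤ i → x j = true := by
      intro a ha
      simp only [Finset.mem_filter, Finset.mem_univ, true_and] at ha ⊢
      intro j hja
      exact h j (lt_of_le_of_lt (Fin.le_def.mp hja) ha)
    have := Finset.card_le_card hsub
    rwa [card_filter_val_lt _ hm] at this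

open Finset in
lemma rank_card {N : ℕ} {α : Type*} [LinearOrder α] (g : Fin N → α)
    (hg : Function.Injective g) (μ : ℕ) :
    (Finset.univ.filter fun k =>
      (Finset.univ.filter fun j => g j < g k).card < μ).card = min μ N := by
  classical
  set r : Fin N → ℕ := fun k => (Finset.univ.filter fun j => g j < g k).card with hr
  have hrlt : ∀ k, r k < N := by
    intro k
    have : (Finset.univ.filter fun j => g j < g k) ⊆ Finset.univ.erase k := by
      intro a ha
      simp only [Finset.mem_filter, Finset.mem_univ, true_and] at ha
      exact Finset.mem_erase.mpr ⟨fun h => absurd (h ▸ ha) (lt_irrefl _), Finset.mem_univ a⟩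
    calc r k ≤ (Finset.univ.erase k).card := Finset.card_le_card this
    _ < Finset.univ.card := Finset.card_erase_lt_of_mem (Finset.mem_univ k)
    _ = N := Finset.card_univ.trans (Fintype.card_fin N)
  set r' : Fin N → Fin N := fun k => ⟨r k, hrlt k⟩ with hr'
  have hmono : ∀ {a b : Fin N}, g a < g b → r a < r b := by
    intro a b hab
    apply Finset.card_lt_card
    constructor
    · intro c hc
      simp only [Finset.mem_filter, Finset.mem_univ, true_and] at hc ⊢
      exact lt_trans hc hab
    · intro hcon
      have ha : a ∈ Finset.univ.filter fun j => g j < g b := by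
        simp [hab]
      have h2 := hcon ha
      simp only [Finset.mem_filter, Finset.mem_univ, true_and] at h2
      exact absurd h2 (lt_irrefl _)
  have hinj : Function.Injective r' := by
    intro a b hab
    by_contra hne
    have hval : r a = r b := congrArg Fin.val hab
    rcases lt_or_gt_of_ne (fun h => hne (hg h) : g a ≠ g b) with h | h
    · exact absurd hval (Nat.ne_of_lt (hmono h))
    · exact absurd hval.symm (Nat.ne_of_lt (hmono h))
  have hbij : Function.Bijective r' := Finite.injective_iff_bijective.mp hinj
  have hcard : (Finset.univ.filter fun k => r k < μ).card
      = (Finset.univ.filter fun v : Fin N => (v : ℕ) < μ).card := by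
    apply Finset.card_bij (fun k _ => r' k)
    · intro a ha
      simp only [Finset.mem_filter, Finset.mem_univ, true_and] at ha ⊢
      exact ha
    · intro a _ b _ h
      exact hinj h
    · intro b hb
      obtain ⟨a, ha⟩ := hbij.2 b
      refine ⟨a, ?_, ha⟩
      simp only [Finset.mem_filter, Finset.mem_univ, true_and] at hb ⊢
      show (r' a : ℕ) < μ
      rw [ha]
      exact hb
  rw [hcard]
  have : (Finset.univ.filter fun v : Fin N => (v : ℕ) < μ)
      = Finset.univ.filter fun v : Fin N => (v : ℕ) < min μ N := by
    ext v
    simp only [Finset.mem_filter, Finset.mem_univ, true_and, lt_min_iff]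
    exact ⟨fun h => ⟨h, v.isLt⟩, fun h => h.1⟩
  rw [this, card_filter_val_lt _ (min_le_right _ _)]

open Finset in
lemma beats_iff_key {n lam : ℕ} (f : (Fin n → Bool) → ℝ) (x : Fin lam → Fin n → Bool)
    (π : Equiv.Perm (Fin lam)) (j k : Fin lam) :
    Beats f x π j k ↔ (toLex (OrderDual.toDual (f (x j)), π j))
      < (toLex (OrderDual.toDual (f (x k)), π k)) := by
  rw [Prod.Lex.lt_iff]
  exact Iff.rfl

lemma selected_card {n lam : ℕ} (f : (Fin n → Bool) → ℝ) (μ : ℕ)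
    (x : Fin lam → Fin n → Bool) (π : Equiv.Perm (Fin lam)) (hμ : μ ≤ lam) :
    (selected f μ x π).card = μ := by
  classical
  set key : Fin lam → Lex (ℝᵒᵈ × Fin lam) :=
    fun k => toLex (OrderDual.toDual (f (x k)), π k) with hkey
  have hinj : Function.Injective key := by
    intro a b h
    have := congrArg (fun z => (ofLex z).2) h
    exact π.injective this
  have hset : ∀ k, (Finset.univ.filter fun j => Beats f x π j k)
      = Finset.univ.filter fun j => key j < key k := by
    intro k
    ext j
    simp only [Finset.mem_filter, Finset.mem_univ, true_and]
    exact beats_iff_key f x π j k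
  have hsel : selected f μ x π
      = Finset.univ.filter fun k => (Finset.univ.filter fun j => key j < key k).card < μ := by
    ext k
    unfold selected
    simp only [Finset.mem_filter, Finset.mem_univ, true_and]
    rw [hset k]
  rw [hsel, rank_card key hinj μ, min_eq_left hμ]

lemma selected_leadingOnes_ge {n lam : ℕ} (μ m : ℕ) (x : Fin lam → Fin n → Bool)
    (π : Equiv.Perm (Fin lam))
    (hcount : μ ≤ (Finset.univ.filter fun k : Fin lam => m ≤ leadingOnes (x k)).card)
    {k : Fin lam} (hk : k ∈ selected (lo n) μ x π) :
    m ≤ leadingOnes (x k) := by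
  classical
  by_contra hlt
  push_neg at hlt
  have hsub : (Finset.univ.filter fun j : Fin lam => m ≤ leadingOnes (x j)) ⊆
      Finset.univ.filter fun j => Beats (lo n) x π j k := by
    intro a ha
    simp only [Finset.mem_filter, Finset.mem_univ, true_and] at ha ⊢
    left
    unfold lo
    exact_mod_cast lt_of_lt_of_le hlt ha
  have h2 := le_trans hcount (Finset.card_le_card hsub)
  unfold selected at hk
  simp only [Finset.mem_filter, Finset.mem_univ, true_and] at hk
  omega

lemma update_eq_one_sub {n lam : ℕ} (f : (Fin n → Bool) → ℝ) (μ : ℕ)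
    (x : Fin lam → Fin n → Bool) (π : Equiv.Perm (Fin lam)) (hn : 2 ≤ n)
    (hμ0 : μ ≠ 0) (hcard : (selected f μ x π).card = μ) (j : Fin n)
    (hall : ∀ k ∈ selected f μ x π, x k j = true) :
    update f μ x π j = 1 - (1 : ℝ) / n := by
  classical
  unfold update
  have hfil : (selected f μ x π).filter (fun k => x k j = true) = selected f μ x π :=
    Finset.filter_true_of_mem hall
  rw [hfil, hcard]
  have hμR : (μ : ℝ) ≠ 0 := Nat.cast_ne_zero.mpr hμ0
  rw [div_self hμR]
  have hnR : (2 : ℝ) ≤ (n : ℝ) := by exact_mod_cast hn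
  have h1 : (1 : ℝ) / n ≤ 1 - 1 / n := by
    rw [div_le_iff₀ (by linarith), sub_mul, one_mul, div_mul_cancel₀]
    · linarith
    · linarith
  have h2 : (1 : ℝ) - 1 / n ≤ 1 := by
    have : (0:ℝ) < 1 / n := by positivity
    linarith
  rw [min_eq_left h2, max_eq_right h1]


lemma log_ge_half_sub (x : ℝ) (hx : 0 < x) (hx1 : x ≤ 1) :
    (x - x⁻¹) / 2 ≤ Real.log x := by
  set u := -Real.log x with hu
  have hu0 : 0 ≤ u := by
    rw [hu, neg_nonneg]
    exact Real.log_nonpos (le_of_lt hx) hx1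
  have hxe : x = Real.exp (-u) := by
    rw [hu, neg_neg, Real.exp_log hx]
  have hinv : x⁻¹ = Real.exp u := by
    rw [hxe, ← Real.exp_neg, neg_neg]
  have hsinh : (x - x⁻¹) / 2 = -Real.sinh u := by
    rw [Real.sinh_eq]
    rw [hinv, hxe]
    ring
  rw [hsinh, hu]
  have := Real.self_le_sinh_iff.mpr hu0
  linarith

lemma key_ineq (δ : ℝ) (hδ0 : 0 < δ) (hδ1 : δ < 1) :
    δ ^ 2 / (2 * (1 - δ)) ≤ δ / (1 - δ) + Real.log (1 - δ) := by
  have hx : (0:ℝ) < 1 - δ := by linarith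
  have h1 := log_ge_half_sub (1 - δ) hx (by linarith)
  have h2 : δ ^ 2 / (2 * (1 - δ)) = δ / (1 - δ) + ((1 - δ) - (1 - δ)⁻¹) / 2 := by
    field_simp
    ring
  linarith

lemma binom_tail (lam μn n : ℕ) (q δ : ℝ) (hq0 : 0 ≤ q) (hq1 : q ≤ 1)
    (hδ0 : 0 < δ) (hδ1 : δ < 1) (hn : 2 ≤ n) (hμlam : μn ≤ lam)
    (hM : (μn : ℝ) / (1 - δ) ≤ q * lam)
    (hμ : 4 * ((1 - δ) / δ ^ 2) * Real.log n ≤ μn) :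
    ∑ j ∈ Finset.range μn, (lam.choose j : ℝ) * q ^ j * (1 - q) ^ (lam - j)
      ≤ 1 / (n : ℝ) ^ 2 := by
  have hx : (0:ℝ) < 1 - δ := by linarith
  have h1q : (0:ℝ) ≤ 1 - q := by linarith
  set S := ∑ j ∈ Finset.range μn, (lam.choose j : ℝ) * q ^ j * (1 - q) ^ (lam - j) with hS
  have hstep1 : S * (1 - δ) ^ μn ≤ (1 - q * δ) ^ lam := by
    have hterm : ∀ j ∈ Finset.range μn,
        (lam.choose j : ℝ) * q ^ j * (1 - q) ^ (lam - j) * (1 - δ) ^ μn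
          ≤ (q * (1 - δ)) ^ j * (1 - q) ^ (lam - j) * (lam.choose j : ℝ) := by
      intro j hj
      have hjμ : j ≤ μn := le_of_lt (Finset.mem_range.mp hj)
      have hpow : (1 - δ) ^ μn ≤ (1 - δ) ^ j :=
        pow_le_pow_of_le_one (le_of_lt hx) (by linarith) hjμ
      have : (lam.choose j : ℝ) * q ^ j * (1 - q) ^ (lam - j) * (1 - δ) ^ μn
          ≤ (lam.choose j : ℝ) * q ^ j * (1 - q) ^ (lam - j) * (1 - δ) ^ j := by
        apply mul_le_mul_of_nonneg_left hpow
        positivity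
      calc (lam.choose j : ℝ) * q ^ j * (1 - q) ^ (lam - j) * (1 - δ) ^ μn
          ≤ (lam.choose j : ℝ) * q ^ j * (1 - q) ^ (lam - j) * (1 - δ) ^ j := this
        _ = (q * (1 - δ)) ^ j * (1 - q) ^ (lam - j) * (lam.choose j : ℝ) := by
            rw [mul_pow]; ring
    calc S * (1 - δ) ^ μn
        = ∑ j ∈ Finset.range μn,
            (lam.choose j : ℝ) * q ^ j * (1 - q) ^ (lam - j) * (1 - δ) ^ μn := by
          rw [hS, Finset.sum_mul]
      _ ≤ ∑ j ∈ Finset.range μn,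
            (q * (1 - δ)) ^ j * (1 - q) ^ (lam - j) * (lam.choose j : ℝ) :=
          Finset.sum_le_sum hterm
      _ ≤ ∑ j ∈ Finset.range (lam + 1),
            (q * (1 - δ)) ^ j * (1 - q) ^ (lam - j) * (lam.choose j : ℝ) := by
          apply Finset.sum_le_sum_of_subset_of_nonneg
          · exact Finset.range_subset_range.mpr (by omega)
          · intro j _ _
            positivity
      _ = (q * (1 - δ) + (1 - q)) ^ lam := (add_pow _ _ _).symm
      _ = (1 - q * δ) ^ lam := by ring_nf
  have hqδ1 : q * δ ≤ 1 := by nlinarith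
  have hexp1 : (1 - q * δ) ^ lam ≤ Real.exp (-(q * δ * lam)) := by
    have h1 : 1 - q * δ ≤ Real.exp (-(q * δ)) := by
      have := Real.add_one_le_exp (-(q * δ))
      linarith
    calc (1 - q * δ) ^ lam ≤ Real.exp (-(q * δ)) ^ lam :=
          pow_le_pow_left₀ (by linarith) h1 lam
      _ = Real.exp (-(q * δ) * lam) := by rw [← Real.exp_nat_mul]; ring_nf
      _ = Real.exp (-(q * δ * lam)) := by ring_nf
  have hpowμ : (1 - δ) ^ μn = Real.exp (μn * Real.log (1 - δ)) := by
    rw [← Real.exp_log hx, ← Real.exp_nat_mul, Real.exp_log hx]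
  have hSle : S ≤ Real.exp (-(q * δ * lam) - μn * Real.log (1 - δ)) := by
    have hpos : (0:ℝ) < (1 - δ) ^ μn := pow_pos hx μn
    rw [Real.exp_sub, ← hpowμ, div_eq_mul_inv]
    rw [← le_div_iff₀ hpos] at hstep1
    calc S ≤ (1 - q * δ) ^ lam / (1 - δ) ^ μn := hstep1
      _ ≤ Real.exp (-(q * δ * lam)) / (1 - δ) ^ μn := by
          apply div_le_div_of_nonneg_right hexp1 (le_of_lt hpos)
      _ = Real.exp (-(q * δ * lam)) * ((1 - δ) ^ μn)⁻¹ := div_eq_mul_inv _ _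
  have hlogn : 0 < Real.log n := Real.log_pos (by exact_mod_cast hn)
  have hexparg : -(q * δ * lam) - μn * Real.log (1 - δ) ≤ -(2 * Real.log n) := by
    have h1 : (μn : ℝ) * δ / (1 - δ) ≤ q * δ * lam := by
      rw [div_le_iff₀ hx] at hM
      calc (μn : ℝ) * δ / (1 - δ) = ((μn : ℝ) / (1 - δ)) * δ := by ring
        _ ≤ (q * lam) * δ := by
            apply mul_le_mul_of_nonneg_right _ (le_of_lt hδ0)
            rw [div_le_iff₀ hx]
            exact hM
        _ = q * δ * lam := by ring
    have h2 := key_ineq δ hδ0 hδ1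
    have h3 : 2 * Real.log n ≤ (μn : ℝ) * (δ ^ 2 / (2 * (1 - δ))) := by
      have hδ2 : (0:ℝ) < δ ^ 2 := by positivity
      rw [mul_comm (4 : ℝ) _, mul_assoc] at hμ
      have := mul_le_mul_of_nonneg_right hμ (le_of_lt (div_pos hδ2 (by linarith : (0:ℝ) < 2 * (1 - δ))))
      calc 2 * Real.log n = ((1 - δ) / δ ^ 2 * (4 * Real.log ↑n)) * (δ ^ 2 / (2 * (1 - δ))) := by
            field_simp
            ring
        _ ≤ (μn : ℝ) * (δ ^ 2 / (2 * (1 - δ))) := this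
    have h4 : (μn : ℝ) * (δ ^ 2 / (2 * (1 - δ))) ≤ (μn : ℝ) * (δ / (1 - δ) + Real.log (1 - δ)) :=
      mul_le_mul_of_nonneg_left h2 (Nat.cast_nonneg μn)
    have h5 : (μn : ℝ) * (δ / (1 - δ)) = (μn : ℝ) * δ / (1 - δ) := by ring
    nlinarith [h1, h3, h4]
  have hfin : Real.exp (-(2 * Real.log n)) = 1 / (n : ℝ) ^ 2 := by
    have hn0 : (0:ℝ) < n := by positivity
    rw [show (2:ℝ) * Real.log n = Real.log (n^2) by rw [Real.log_pow]; push_cast; ring,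
      Real.exp_neg, Real.exp_log (by positivity)]
    rw [one_div]
  calc S ≤ Real.exp (-(q * δ * lam) - μn * Real.log (1 - δ)) := hSle
    _ ≤ Real.exp (-(2 * Real.log n)) := Real.exp_le_exp.mpr hexparg
    _ = 1 / (n : ℝ) ^ 2 := hfin

end UMDAProof

set_option maxHeartbeats 1000000 in
lemma _dummy : True := trivial

namespace UMDAProof
set_option maxHeartbeats 1000000

open Finset

variable {n lam : ℕ}

instance : MeasurableSingletonClass (Equiv.Perm (Fin lam)) := ⟨fun _ => trivial⟩

lemma measurable_sample_pair :
    Measurable (fun z : (Fin n → ℝ) × ((Fin lam → Fin n → ℝ) × Equiv.Perm (Fin lam)) =>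
      (sample z.1 z.2.1, z.2.2)) := by
  apply Measurable.prodMk
  · apply measurable_pi_lambda
    intro k
    apply measurable_pi_lambda
    intro j
    apply measurable_to_countable'
    intro b
    have h1 : MeasurableSet {z : (Fin n → ℝ) × ((Fin lam → Fin n → ℝ) × Equiv.Perm (Fin lam)) |
        z.2.1 k j < z.1 j} := by
      apply measurableSet_lt
      · exact (measurable_pi_apply j).comp ((measurable_pi_apply k).comp
          (measurable_fst.comp measurable_snd))
      · exact (measurable_pi_apply j).comp measurable_fst
    cases b
    · have : (fun z : (Fin n → ℝ) × ((Fin lam → Fin n → ℝ) × Equiv.Perm (Fin lam)) =>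
          sample z.1 z.2.1 k j) ⁻¹' {false} =
          {z : (Fin n → ℝ) × ((Fin lam → Fin n → ℝ) × Equiv.Perm (Fin lam)) |
            z.2.1 k j < z.1 j}ᶜ := by
        ext z
        simp [sample]
      rw [this]
      exact h1.compl
    · have : (fun z : (Fin n → ℝ) × ((Fin lam → Fin n → ℝ) × Equiv.Perm (Fin lam)) =>
          sample z.1 z.2.1 k j) ⁻¹' {true} =
          {z : (Fin n → ℝ) × ((Fin lam → Fin n → ℝ) × Equiv.Perm (Fin lam)) |
            z.2.1 k j < z.1 j} := by
        ext z
        simp [sample]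
      rw [this]
      exact h1
  · exact measurable_snd.comp measurable_snd

lemma measurable_comp_pair {β : Type*} [MeasurableSpace β]
    (F : (Fin lam → Fin n → Bool) × Equiv.Perm (Fin lam) → β) :
    Measurable (fun z : (Fin n → ℝ) × ((Fin lam → Fin n → ℝ) × Equiv.Perm (Fin lam)) =>
      F (sample z.1 z.2.1, z.2.2)) :=
  (measurable_of_countable F).comp measurable_sample_pair

lemma measurable_Phi (f : (Fin n → Bool) → ℝ) (μ : ℕ) :
    Measurable (fun z : (Fin n → ℝ) × ((Fin lam → Fin n → ℝ) × Equiv.Perm (Fin lam)) =>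
      update f μ (sample z.1 z.2.1) z.2.2) :=
  measurable_comp_pair (fun w => update f μ w.1 w.2)

lemma measurable_freq {Ω : Type*} [MeasurableSpace Ω]
    (f : (Fin n → Bool) → ℝ) (μ : ℕ)
    (step : ℕ → Ω → (Fin lam → Fin n → ℝ) × Equiv.Perm (Fin lam))
    (hstep : ∀ t, Measurable (step t)) (t : ℕ) :
    Measurable (freq f μ step t) := by
  induction t with
  | zero => exact measurable_const
  | succ t ih =>
      have : freq f μ step (t + 1) = (fun z : (Fin n → ℝ) ×
          ((Fin lam → Fin n → ℝ) × Equiv.Perm (Fin lam)) =>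
            update f μ (sample z.1 z.2.1) z.2.2) ∘
          (fun ω => (freq f μ step t ω, step t ω)) := rfl
      rw [this]
      exact (measurable_Phi f μ).comp (ih.prodMk (hstep t))

/-- Mirror of `freq` as a function of the step sequence. -/
def freqOf (f : (Fin n → Bool) → ℝ) (μ : ℕ)
    (g : ℕ → (Fin lam → Fin n → ℝ) × Equiv.Perm (Fin lam)) : ℕ → Fin n → ℝ
  | 0 => fun _ => 1 / 2
  | t + 1 => update f μ (sample (freqOf f μ g t) (g t).1) (g t).2

lemma freq_eq_freqOf {Ω : Type*} (f : (Fin n → Bool) → ℝ) (μ : ℕ)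
    (step : ℕ → Ω → (Fin lam → Fin n → ℝ) × Equiv.Perm (Fin lam)) (t : ℕ) (ω : Ω) :
    freq f μ step t ω = freqOf f μ (fun s => step s ω) t := by
  induction t with
  | zero => rfl
  | succ t ih =>
      show update f μ (sample (freq f μ step t ω) (step t ω).1) (step t ω).2 = _
      rw [freqOf, ih]

lemma freqOf_congr (f : (Fin n → Bool) → ℝ) (μ : ℕ)
    {g g' : ℕ → (Fin lam → Fin n → ℝ) × Equiv.Perm (Fin lam)} (t : ℕ)
    (h : ∀ s, s < t → g s = g' s) : freqOf f μ g t = freqOf f μ g' t := by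
  induction t with
  | zero => rfl
  | succ t ih =>
      rw [freqOf, freqOf, ih (fun s hs => h s (by omega)), h t (by omega)]

def stepDefault : (Fin lam → Fin n → ℝ) × Equiv.Perm (Fin lam) := ⟨fun _ _ => 0, 1⟩

/-- `freqOf` applied to the restriction of the step sequence to `range t`. -/
def Psi (f : (Fin n → Bool) → ℝ) (μ t : ℕ)
    (h : ↥(Finset.range t) → (Fin lam → Fin n → ℝ) × Equiv.Perm (Fin lam)) :
    Fin n → ℝ :=
  freqOf f μ (fun s => if hs : s ∈ Finset.range t then h ⟨s, hs⟩ else stepDefault) t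

lemma measurable_Psi (f : (Fin n → Bool) → ℝ) (μ t : ℕ) :
    Measurable (Psi (lam := lam) f μ t) := by
  unfold Psi
  suffices H : ∀ m, m ≤ t → Measurable (fun h : ↥(Finset.range t) →
      (Fin lam → Fin n → ℝ) × Equiv.Perm (Fin lam) =>
      freqOf f μ (fun s => if hs : s ∈ Finset.range t then h ⟨s, hs⟩ else stepDefault) m) from
    H t le_rfl
  intro m hm
  induction m with
  | zero => exact measurable_const
  | succ m ih =>
      have hmt : m ∈ Finset.range t := Finset.mem_range.mpr (by omega)
      have heq : (fun h : ↥(Finset.range t) →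
          (Fin lam → Fin n → ℝ) × Equiv.Perm (Fin lam) =>
          freqOf f μ (fun s => if hs : s ∈ Finset.range t then h ⟨s, hs⟩ else stepDefault)
            (m + 1)) = (fun z : (Fin n → ℝ) ×
          ((Fin lam → Fin n → ℝ) × Equiv.Perm (Fin lam)) =>
            update f μ (sample z.1 z.2.1) z.2.2) ∘
          (fun h => (freqOf f μ
            (fun s => if hs : s ∈ Finset.range t then h ⟨s, hs⟩ else stepDefault) m,
            h ⟨m, hmt⟩)) := by
        funext h
        simp only [Function.comp_apply, freqOf, dif_pos hmt]
      rw [heq]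
      exact (measurable_Phi f μ).comp ((ih (by omega)).prodMk (measurable_pi_apply _))

lemma indep_freq_step {Ω : Type} [MeasureSpace Ω]
    (M : Model n lam Ω) (f : (Fin n → Bool) → ℝ) (μ : ℕ) (t : ℕ) :
    ProbabilityTheory.IndepFun (freq f μ M.step t) (M.step t) ℙ := by
  have hbase := M.indep_step.indepFun_finset (Finset.range t) {t}
    (by simp [Finset.disjoint_singleton_right]) M.measurable_step
  have hT : t ∈ ({t} : Finset ℕ) := Finset.mem_singleton_self t
  have h2 := hbase.comp (measurable_Psi (lam := lam) f μ t)
    (measurable_pi_apply (⟨t, hT⟩ : ↥({t} : Finset ℕ)))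
  have e1 : (Psi (lam := lam) f μ t ∘ fun a (i : ↥(Finset.range t)) => M.step i a)
      = freq f μ M.step t := by
    funext ω
    show Psi f μ t (fun i : ↥(Finset.range t) => M.step i ω) = freq f μ M.step t ω
    rw [freq_eq_freqOf]
    unfold Psi
    apply freqOf_congr
    intro s hs
    rw [dif_pos (Finset.mem_range.mpr hs)]
  have e2 : ((fun h : ↥({t} : Finset ℕ) → (Fin lam → Fin n → ℝ) × Equiv.Perm (Fin lam) =>
      h ⟨t, hT⟩) ∘ fun a (i : ↥({t} : Finset ℕ)) => M.step i a) = M.step t := rfl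
  rw [e1, e2] at h2
  exact h2

end UMDAProof

namespace UMDAProof
open Finset MeasureTheory

instance : IsProbabilityMeasure unif01 := by
  constructor
  rw [unif01, Measure.restrict_apply MeasurableSet.univ, Set.univ_inter, Real.volume_Icc]
  norm_num

lemma unif01_Iio (c : ℝ) (hc : 0 ≤ c) : unif01 (Set.Iio c) = ENNReal.ofReal (min c 1) := by
  rw [unif01, Measure.restrict_apply measurableSet_Iio]
  rcases le_or_gt c 1 with h | h
  · have hset : Set.Iio c ∩ Set.Icc 0 1 = Set.Ico 0 c := by
      ext x
      simp only [Set.mem_inter_iff, Set.mem_Iio, Set.mem_Icc, Set.mem_Ico]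
      constructor
      · rintro ⟨h1, h2, _⟩; exact ⟨h2, h1⟩
      · rintro ⟨h1, h2⟩; exact ⟨h2, h1, le_trans (le_of_lt h2) h⟩
    rw [hset, Real.volume_Ico, min_eq_left h, sub_zero]
  · have hset : Set.Iio c ∩ Set.Icc 0 1 = Set.Icc 0 1 := by
      apply Set.inter_eq_right.mpr
      intro x hx
      exact lt_of_le_of_lt hx.2 h
    rw [hset, Real.volume_Icc, min_eq_right (le_of_lt h), sub_zero]

lemma core_bound (n lam μn : ℕ) (hn : 2 ≤ n) (hμ0 : 1 ≤ μn) (hμlam : μn ≤ lam)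
    (δ : ℝ) (hδ0 : 0 < δ) (hδ1 : δ < 1)
    (hμb : 4 * ((1 - δ) / δ ^ 2) * Real.log n ≤ μn)
    (m : ℕ) (hmn : m ≤ n) (p : Fin n → ℝ)
    (hp0 : ∀ j : Fin n, (j : ℕ) < m → 0 ≤ p j)
    (hM : (μn : ℝ) / (1 - δ) ≤
      (∏ j ∈ Finset.univ.filter fun j : Fin n => (j : ℕ) < m, min (p j) 1) * lam) :
    ENNReal.ofReal (1 - 1 / (n : ℝ) ^ 2) ≤
      stepLaw n lam {y : (Fin lam → Fin n → ℝ) × Equiv.Perm (Fin lam) |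
        ∀ j : Fin n, (j : ℕ) < m →
          update (lo n) μn (sample p y.1) y.2 j = 1 - 1 / (n : ℝ)} := by
  classical
  set r : Fin n → ℝ := fun j => min (p j) 1 with hr
  set q : ℝ := ∏ j ∈ Finset.univ.filter fun j : Fin n => (j : ℕ) < m, r j with hqdef
  have hr0 : ∀ j ∈ Finset.univ.filter fun j : Fin n => (j : ℕ) < m, 0 ≤ r j := by
    intro j hj
    simp only [Finset.mem_filter, Finset.mem_univ, true_and] at hj
    exact le_min (hp0 j hj) zero_le_one
  have hr1 : ∀ j ∈ Finset.univ.filter fun j : Fin n => (j : ℕ) < m, r j ≤ 1 :=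
    fun j _ => min_le_right _ _
  have hq0 : 0 ≤ q := Finset.prod_nonneg hr0
  have hq1 : q ≤ 1 := Finset.prod_le_one hr0 hr1
  -- the single-individual event
  set E1 : Set (Fin n → ℝ) :=
    Set.pi Set.univ (fun j : Fin n => if (j : ℕ) < m then Set.Iio (p j) else Set.univ)
    with hE1def
  have hE1mem : ∀ v : Fin n → ℝ, v ∈ E1 ↔ ∀ j : Fin n, (j : ℕ) < m → v j < p j := by
    intro v
    rw [hE1def, Set.mem_univ_pi]
    constructor
    · intro h j hj
      have := h j
      rwa [if_pos hj] at this
    · intro h j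
      by_cases hj : (j : ℕ) < m
      · rw [if_pos hj]; exact h j hj
      · rw [if_neg hj]; trivial
  have hE1meas : MeasurableSet E1 := by
    apply MeasurableSet.univ_pi
    intro j
    by_cases hj : (j : ℕ) < m
    · rw [if_pos hj]; exact measurableSet_Iio
    · rw [if_neg hj]; exact MeasurableSet.univ
  have hE1measure : (Measure.pi fun _ : Fin n => unif01) E1 = ENNReal.ofReal q := by
    rw [hE1def, Measure.pi_pi]
    have hterm : ∀ j : Fin n,
        unif01 (if (j : ℕ) < m then Set.Iio (p j) else Set.univ)
          = if (j : ℕ) < m then ENNReal.ofReal (r j) else 1 := by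
      intro j
      by_cases hj : (j : ℕ) < m
      · rw [if_pos hj, if_pos hj, unif01_Iio (p j) (hp0 j hj)]
      · rw [if_neg hj, if_neg hj, measure_univ]
    rw [Finset.prod_congr rfl fun j _ => hterm j, Finset.prod_ite, Finset.prod_const_one,
      mul_one, hqdef, ENNReal.ofReal_prod_of_nonneg hr0]
  set ν : Measure (Fin lam → Fin n → ℝ) :=
    Measure.pi fun _ : Fin lam => Measure.pi fun _ : Fin n => unif01 with hν
  -- the exact-success-set events
  set VS : Finset (Fin lam) → Set (Fin lam → Fin n → ℝ) :=
    fun S => Set.pi Set.univ (fun k => if k ∈ S then E1 else E1ᶜ) with hVS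
  have hVSmem : ∀ u S, u ∈ VS S ↔ ∀ k : Fin lam, (u k ∈ E1 ↔ k ∈ S) := by
    intro u S
    rw [hVS, Set.mem_univ_pi]
    constructor
    · intro h k
      have := h k
      by_cases hk : k ∈ S
      · rw [if_pos hk] at this; exact ⟨fun _ => hk, fun _ => this⟩
      · rw [if_neg hk] at this; exact ⟨fun hu => absurd hu this, fun hk' => absurd hk' hk⟩
    · intro h k
      by_cases hk : k ∈ S
      · rw [if_pos hk]; exact (h k).mpr hk
      · rw [if_neg hk]; exact fun hu => hk ((h k).mp hu)
  have hVSmeas : ∀ S, MeasurableSet (VS S) := by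
    intro S
    apply MeasurableSet.univ_pi
    intro k
    by_cases hk : k ∈ S
    · rw [if_pos hk]; exact hE1meas
    · rw [if_neg hk]; exact hE1meas.compl
  have hVSmeasure : ∀ S : Finset (Fin lam),
      ν (VS S) = ENNReal.ofReal (q ^ S.card * (1 - q) ^ (lam - S.card)) := by
    intro S
    rw [hVS, hν, Measure.pi_pi]
    have hcompl : (Measure.pi fun _ : Fin n => unif01) E1ᶜ = ENNReal.ofReal (1 - q) := by
      rw [measure_compl hE1meas (measure_ne_top _ _), hE1measure, measure_univ,
        ENNReal.ofReal_sub 1 hq0, ENNReal.ofReal_one]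
    have hterm : ∀ k : Fin lam,
        (Measure.pi fun _ : Fin n => unif01) (if k ∈ S then E1 else E1ᶜ)
          = if k ∈ S then ENNReal.ofReal q else ENNReal.ofReal (1 - q) := by
      intro k
      by_cases hk : k ∈ S
      · rw [if_pos hk, if_pos hk, hE1measure]
      · rw [if_neg hk, if_neg hk, hcompl]
    rw [Finset.prod_congr rfl fun k _ => hterm k, Finset.prod_ite, Finset.prod_const,
      Finset.prod_const]
    have h1 : Finset.univ.filter (fun k : Fin lam => k ∈ S) = S := by
      ext k; simp
    have h2 : Finset.univ.filter (fun k : Fin lam => ¬ k ∈ S) = Sᶜ := by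
      ext k; simp
    rw [h1, h2, Finset.card_compl, Fintype.card_fin,
      ENNReal.ofReal_mul (pow_nonneg hq0 _), ENNReal.ofReal_pow hq0,
      ENNReal.ofReal_pow (by linarith : (0:ℝ) ≤ 1 - q)]
  -- the success-count event
  set U : Set (Fin lam → Fin n → ℝ) :=
    {u | μn ≤ (Finset.univ.filter fun k : Fin lam =>
      ∀ j : Fin n, (j : ℕ) < m → u k j < p j).card} with hU
  have hexact : ∀ u S, u ∈ VS S →
      S = Finset.univ.filter fun k : Fin lam => ∀ j : Fin n, (j : ℕ) < m → u k j < p j := by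
    intro u S hu
    ext k
    rw [Finset.mem_filter]
    rw [hVSmem] at hu
    constructor
    · intro hk
      exact ⟨Finset.mem_univ k, (hE1mem (u k)).mp ((hu k).mpr hk)⟩
    · intro hk
      exact (hu k).mp ((hE1mem (u k)).mpr hk.2)
  have hUceq : Uᶜ = ⋃ S ∈ (Finset.univ.filter fun S : Finset (Fin lam) => S.card < μn),
      VS S := by
    ext u
    simp only [Set.mem_compl_iff, hU, Set.mem_setOf_eq, not_le, Set.mem_iUnion]
    constructor
    · intro h
      refine ⟨Finset.univ.filter fun k : Fin lam =>
        ∀ j : Fin n, (j : ℕ) < m → u k j < p j, ?_, ?_⟩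
      · simp only [Finset.mem_filter, Finset.mem_univ, true_and]
        exact h
      · rw [hVSmem]
        intro k
        rw [hE1mem, Finset.mem_filter]
        exact ⟨fun h' => ⟨Finset.mem_univ k, h'⟩, fun h' => h'.2⟩
    · rintro ⟨S, hS, hu⟩
      simp only [Finset.mem_filter, Finset.mem_univ, true_and] at hS
      rwa [← hexact u S hu]
  have hUmeas : MeasurableSet U := by
    rw [← compl_compl U, hUceq]
    exact (MeasurableSet.biUnion (Finset.countable_toSet _) fun S _ => hVSmeas S).compl
  -- the binomial tail bound
  have htail := binom_tail lam μn n q δ hq0 hq1 hδ0 hδ1 hn hμlam (by rwa [hqdef]) hμb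
  have hUc_le : ν Uᶜ ≤ ENNReal.ofReal (1 / (n : ℝ) ^ 2) := by
    rw [hUceq]
    calc ν (⋃ S ∈ (Finset.univ.filter fun S : Finset (Fin lam) => S.card < μn), VS S)
        ≤ ∑ S ∈ (Finset.univ.filter fun S : Finset (Fin lam) => S.card < μn), ν (VS S) :=
          measure_biUnion_finset_le _ _
      _ = ∑ S ∈ (Finset.univ.filter fun S : Finset (Fin lam) => S.card < μn),
            ENNReal.ofReal (q ^ S.card * (1 - q) ^ (lam - S.card)) :=
          Finset.sum_congr rfl fun S _ => hVSmeasure S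
      _ = ENNReal.ofReal (∑ S ∈ (Finset.univ.filter fun S : Finset (Fin lam) => S.card < μn),
            q ^ S.card * (1 - q) ^ (lam - S.card)) := by
          rw [ENNReal.ofReal_sum_of_nonneg]
          intro S _
          have : (0:ℝ) ≤ 1 - q := by linarith
          positivity
      _ ≤ ENNReal.ofReal (1 / (n : ℝ) ^ 2) := by
          apply ENNReal.ofReal_le_ofReal
          calc ∑ S ∈ (Finset.univ.filter fun S : Finset (Fin lam) => S.card < μn),
                q ^ S.card * (1 - q) ^ (lam - S.card)
              = ∑ j ∈ Finset.range μn, (lam.choose j : ℝ) * q ^ j * (1 - q) ^ (lam - j) := by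
                have hpart : (Finset.univ.filter fun S : Finset (Fin lam) => S.card < μn)
                    = (Finset.range μn).biUnion
                        (fun j => Finset.powersetCard j Finset.univ) := by
                  ext S
                  simp only [Finset.mem_filter, Finset.mem_univ, true_and,
                    Finset.mem_biUnion, Finset.mem_range, Finset.mem_powersetCard]
                  constructor
                  · intro h
                    exact ⟨S.card, h, Finset.subset_univ S, rfl⟩
                  · rintro ⟨j, hj, _, rfl⟩
                    exact hj
                rw [hpart, Finset.sum_biUnion]
                · apply Finset.sum_congr rfl
                  intro j _
                  have : ∀ S ∈ Finset.powersetCard j (Finset.univ : Finset (Fin lam)),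
                      q ^ S.card * (1 - q) ^ (lam - S.card) = q ^ j * (1 - q) ^ (lam - j) := by
                    intro S hS
                    rw [(Finset.mem_powersetCard.mp hS).2]
                  rw [Finset.sum_congr rfl this, Finset.sum_const, Finset.card_powersetCard,
                    Finset.card_univ, Fintype.card_fin, nsmul_eq_mul, mul_assoc]
                · intro a ha b hb hab
                  apply Finset.disjoint_left.mpr
                  intro S hSa hSb
                  simp only [Finset.mem_powersetCard] at hSa hSb
                  exact hab (hSa.2.symm.trans hSb.2)
            _ ≤ 1 / (n : ℝ) ^ 2 := htail
  have hUge : ENNReal.ofReal (1 - 1 / (n : ℝ) ^ 2) ≤ ν U := by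
    have hcompl := prob_compl_eq_one_sub hUmeas (μ := ν)
    have hle1 : ν U ≤ 1 := prob_le_one
    have h1 : (1 : ℝ≥0∞) - ν U ≤ ENNReal.ofReal (1 / (n : ℝ) ^ 2) := by
      rw [← hcompl]; exact hUc_le
    have h2 : ENNReal.ofReal (1 - 1 / (n : ℝ) ^ 2)
        = 1 - ENNReal.ofReal (1 / (n : ℝ) ^ 2) := by
      rw [ENNReal.ofReal_sub 1 (by positivity), ENNReal.ofReal_one]
    rw [h2]
    rw [tsub_le_iff_left] at h1 ⊢
    rwa [add_comm]
  -- deterministic part: on U ×ˢ univ the update sets all frequencies below m to 1 - 1/n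
  have hdet : U ×ˢ (Set.univ : Set (Equiv.Perm (Fin lam))) ⊆
      {y : (Fin lam → Fin n → ℝ) × Equiv.Perm (Fin lam) |
        ∀ j : Fin n, (j : ℕ) < m →
          update (lo n) μn (sample p y.1) y.2 j = 1 - 1 / (n : ℝ)} := by
    rintro ⟨u, π⟩ ⟨hu, -⟩
    intro j hj
    set x := sample p u with hx
    have hbit : ∀ k : Fin lam, (∀ j' : Fin n, (j' : ℕ) < m → u k j' < p j') →
        ∀ j' : Fin n, (j' : ℕ) < m → x k j' = true := by
      intro k hk j' hj'
      rw [hx]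
      unfold sample
      simp only [decide_eq_true_eq]
      exact hk j' hj'
    have hcount : μn ≤ (Finset.univ.filter fun k : Fin lam =>
        m ≤ leadingOnes (x k)).card := by
      apply le_trans hu
      apply Finset.card_le_card
      intro k hk
      simp only [Finset.mem_filter, Finset.mem_univ, true_and] at hk ⊢
      exact (leadingOnes_ge_iff (x k) m hmn).mpr (hbit k hk)
    have hselcard := selected_card (lo n) μn x π hμlam
    apply update_eq_one_sub (lo n) μn x π hn (by omega) hselcard
    intro k hk
    exact (leadingOnes_ge_iff (x k) m hmn).mp
      (selected_leadingOnes_ge μn m x π hcount hk) j hj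
  calc ENNReal.ofReal (1 - 1 / (n : ℝ) ^ 2) ≤ ν U := hUge
    _ = ν U * (PMF.uniformOfFintype (Equiv.Perm (Fin lam))).toMeasure Set.univ := by
        rw [measure_univ, mul_one]
    _ = stepLaw n lam (U ×ˢ (Set.univ : Set (Equiv.Perm (Fin lam)))) :=
        (Measure.prod_prod _ _).symm
    _ ≤ stepLaw n lam {y : (Fin lam → Fin n → ℝ) × Equiv.Perm (Fin lam) |
          ∀ j : Fin n, (j : ℕ) < m →
            update (lo n) μn (sample p y.1) y.2 j = 1 - 1 / (n : ℝ)} :=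
        measure_mono hdet

end UMDAProof

namespace UMDAProof
open Finset MeasureTheory ProbabilityTheory

instance (n lam : ℕ) : IsProbabilityMeasure (stepLaw n lam) := by
  unfold stepLaw
  infer_instance

end UMDAProof
open UMDAProof

set_option maxHeartbeats 2000000 in
set_option maxHeartbeats 2000000


/-- Lemma 3.3: let `δ ∈ (0,1)` and `ζ = (1-δ)/(4e)`; consider the
UMDA optimizing LeadingOnes with `μ ≥ 4((1-δ)/δ²) ln n` and `lam ≥ μ/ζ`, and let
`d = ⌊log₄(ζ lam/μ)⌋`.  Consider an iteration `t` such that position `i` is critical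
and all frequencies at positions `≥ i` are at least `1/4` (we condition on this event
`A`, assumed to have positive probability).  Then, with (conditional) probability at
least `1 - 1/n²`, all frequencies at the (1-based) positions in `[min{n, (i+1)+d}]`
equal `1 - 1/n` after iteration `t`.  (`i : Fin n` is the 0-based index of the
1-based position `i + 1 ∈ [n]`.) -/
theorem umda_critical_frequency_jump
    (n : ℕ) (hn : 2 ≤ n) (δ : ℝ) (hδ : δ ∈ Set.Ioo (0 : ℝ) 1)
    (μ lam : ℕ) (hμlam : μ ≤ lam)
    (hμ : 4 * ((1 - δ) / δ ^ 2) * Real.log n ≤ μ)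
    (hlam : (μ : ℝ) / ((1 - δ) / (4 * Real.exp 1)) ≤ lam)
    (Ω : Type) (_ : MeasureSpace Ω) (_ : IsProbabilityMeasure (ℙ : Measure Ω))
    (M : Model n lam Ω) (t : ℕ) (i : Fin n)
    (A : Set Ω)
    (hA : A = {ω : Ω | IsCritical (freq (lo n) μ M.step t ω) i ∧
        ∀ j : Fin n, i ≤ j → (1 : ℝ) / 4 ≤ freq (lo n) μ M.step t ω j})
    (hA0 : ℙ A ≠ 0) :
    ENNReal.ofReal (1 - 1 / (n : ℝ) ^ 2) ≤
      ℙ[{ω : Ω | ∀ j : Fin n,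
          (j : ℕ) <
              min n ((i : ℕ) + 1 +
                ⌊Real.logb 4 ((1 - δ) / (4 * Real.exp 1) * lam / μ)⌋₊) →
            freq (lo n) μ M.step (t + 1) ω j = 1 - (1 : ℝ) / n} | A] := by
  classical
  obtain ⟨hδ0, hδ1⟩ := hδ
  have hδ1' : (0:ℝ) < 1 - δ := by linarith
  have hnR : (2:ℝ) ≤ (n:ℝ) := by exact_mod_cast hn
  have hnpos : (0:ℝ) < n := by linarith
  have hlogn : 0 < Real.log n := Real.log_pos (by linarith)
  have he1 : (0:ℝ) < Real.exp 1 := Real.exp_pos 1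
  have hζ0 : (0:ℝ) < (1 - δ) / (4 * Real.exp 1) := by positivity
  have hμR : (0:ℝ) < μ := by
    refine lt_of_lt_of_le ?_ hμ
    have : (0:ℝ) < (1 - δ) / δ ^ 2 := by positivity
    positivity
  have hμ1 : 1 ≤ μ := by exact_mod_cast Nat.one_le_iff_ne_zero.mpr (by
    intro h
    rw [h] at hμR
    exact absurd hμR (by norm_num))
  set d : ℕ := ⌊Real.logb 4 ((1 - δ) / (4 * Real.exp 1) * lam / μ)⌋₊ with hddef
  set m : ℕ := min n ((i : ℕ) + 1 + d) with hmdef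
  have hmn : m ≤ n := min_le_left _ _
  have him : (i : ℕ) < m := lt_min i.isLt (by omega)
  have hmile : m ≤ (i : ℕ) + 1 + d := min_le_right _ _
  -- the floor bound
  set X : ℝ := (1 - δ) / (4 * Real.exp 1) * lam / μ with hXdef
  have hζlam : (μ:ℝ) ≤ (1 - δ) / (4 * Real.exp 1) * lam := by
    rw [div_le_iff₀ hζ0] at hlam
    linarith [hlam]
  have hX1 : 1 ≤ X := by
    rw [hXdef, le_div_iff₀ hμR, one_mul]
    exact hζlam
  have hd4 : (4:ℝ) ^ d ≤ X := by
    have hfl := Nat.floor_le (Real.logb_nonneg (by norm_num : (1:ℝ) < 4) hX1)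
    calc (4:ℝ) ^ d = (4:ℝ) ^ (d : ℝ) := (Real.rpow_natCast 4 d).symm
      _ ≤ (4:ℝ) ^ (Real.logb 4 X) := by
          apply Real.rpow_le_rpow_of_exponent_le (by norm_num)
          exact hfl
      _ = X := Real.rpow_logb (by norm_num) (by norm_num) (lt_of_lt_of_le one_pos hX1)
  -- measurability of the frequency process
  have hfreqmeas := measurable_freq (lo n) μ M.step M.measurable_step
  -- the event on frequency vectors
  set SA : Set (Fin n → ℝ) :=
    {p | IsCritical p i ∧ ∀ j : Fin n, i ≤ j → (1:ℝ)/4 ≤ p j} with hSAdef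
  have hSAmeas : MeasurableSet SA := by
    have h1 : SA = (⋂ j : Fin n, {p : Fin n → ℝ | j < i → p j = 1 - (1:ℝ)/n}) ∩
        ({p : Fin n → ℝ | p i < 1 - (1:ℝ)/n} ∩
          ⋂ j : Fin n, {p : Fin n → ℝ | i ≤ j → (1:ℝ)/4 ≤ p j}) := by
      ext p
      simp only [hSAdef, Set.mem_setOf_eq, Set.mem_inter_iff, Set.mem_iInter, IsCritical]
      tauto
    rw [h1]
    apply MeasurableSet.inter
    · apply MeasurableSet.iInter
      intro j
      by_cases hji : j < i
      · simp only [hji, true_implies]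
        exact (measurable_pi_apply j) (measurableSet_singleton _)
      · simp only [hji, false_implies]
        exact MeasurableSet.univ
    apply MeasurableSet.inter
    · exact measurableSet_lt (measurable_pi_apply i) measurable_const
    · apply MeasurableSet.iInter
      intro j
      by_cases hji : i ≤ j
      · simp only [hji, true_implies]
        exact measurableSet_le measurable_const (measurable_pi_apply j)
      · simp only [hji, false_implies]
        exact MeasurableSet.univ
  have hApre : A = freq (lo n) μ M.step t ⁻¹' SA := by rw [hA]; rfl
  have hAmeas : MeasurableSet A := by rw [hApre]; exact (hfreqmeas t) hSAmeas
  -- the target event as a preimage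
  set W : Set ((Fin n → ℝ) × ((Fin lam → Fin n → ℝ) × Equiv.Perm (Fin lam))) :=
    {z | ∀ j : Fin n, (j : ℕ) < m →
      update (lo n) μ (sample z.1 z.2.1) z.2.2 j = 1 - (1:ℝ)/n} with hWdef
  have hWmeas : MeasurableSet W := by
    have h1 : W = ⋂ j : Fin n, {z : (Fin n → ℝ) ×
        ((Fin lam → Fin n → ℝ) × Equiv.Perm (Fin lam)) |
          (j : ℕ) < m → update (lo n) μ (sample z.1 z.2.1) z.2.2 j = 1 - (1:ℝ)/n} := by
      ext z
      simp only [hWdef, Set.mem_setOf_eq, Set.mem_iInter]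
    rw [h1]
    apply MeasurableSet.iInter
    intro j
    by_cases hj : (j : ℕ) < m
    · simp only [hj, true_implies]
      exact ((measurable_pi_apply j).comp (measurable_Phi (lo n) μ))
        (measurableSet_singleton _)
    · simp only [hj, false_implies]
      exact MeasurableSet.univ
  set E : Set Ω := {ω : Ω | ∀ j : Fin n, (j : ℕ) < m →
      freq (lo n) μ M.step (t + 1) ω j = 1 - (1:ℝ)/n} with hEdef
  have hEpair : E = (fun ω => (freq (lo n) μ M.step t ω, M.step t ω)) ⁻¹' W := rfl
  -- independence and the product law
  have hindep := indep_freq_step M (lo n) μ t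
  have hpairmeas : Measurable (fun ω => (freq (lo n) μ M.step t ω, M.step t ω)) :=
    (hfreqmeas t).prodMk (M.measurable_step t)
  have hmap : Measure.map (fun ω => (freq (lo n) μ M.step t ω, M.step t ω)) ℙ
      = (Measure.map (freq (lo n) μ M.step t) ℙ).prod (stepLaw n lam) := by
    rw [← M.law_step t]
    exact (ProbabilityTheory.indepFun_iff_map_prod_eq_prod_map_map
      (hfreqmeas t).aemeasurable (M.measurable_step t).aemeasurable).mp hindep
  have hAE : A ∩ E = (fun ω => (freq (lo n) μ M.step t ω, M.step t ω)) ⁻¹'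
      ((SA ×ˢ (Set.univ : Set ((Fin lam → Fin n → ℝ) × Equiv.Perm (Fin lam)))) ∩ W) := by
    rw [hApre, hEpair]
    ext ω
    simp only [Set.mem_inter_iff, Set.mem_preimage, Set.mem_prod, Set.mem_univ, and_true]
  have hCmeas : MeasurableSet
      ((SA ×ˢ (Set.univ : Set ((Fin lam → Fin n → ℝ) × Equiv.Perm (Fin lam)))) ∩ W) :=
    (hSAmeas.prod MeasurableSet.univ).inter hWmeas
  -- pointwise slice bound
  have hslice : ∀ p : Fin n → ℝ, p ∈ SA →
      ENNReal.ofReal (1 - 1 / (n : ℝ) ^ 2) ≤ stepLaw n lam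
        (Prod.mk p ⁻¹' ((SA ×ˢ (Set.univ : Set ((Fin lam → Fin n → ℝ) ×
          Equiv.Perm (Fin lam)))) ∩ W)) := by
    intro p hp
    obtain ⟨⟨hcrit, hpi⟩, hquarter⟩ := hp
    have hsl : Prod.mk p ⁻¹' ((SA ×ˢ (Set.univ : Set ((Fin lam → Fin n → ℝ) ×
        Equiv.Perm (Fin lam)))) ∩ W) =
        {y : (Fin lam → Fin n → ℝ) × Equiv.Perm (Fin lam) |
          ∀ j : Fin n, (j : ℕ) < m →
            update (lo n) μ (sample p y.1) y.2 j = 1 - 1 / (n : ℝ)} := by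
      ext y
      simp only [Set.mem_preimage, Set.mem_inter_iff, Set.mem_prod, Set.mem_univ, and_true,
        hWdef, Set.mem_setOf_eq]
      constructor
      · exact fun h => h.2
      · exact fun h => ⟨⟨⟨hcrit, hpi⟩, hquarter⟩, h⟩
    rw [hsl]
    -- prerequisites for the core bound
    have hbase : (0:ℝ) < 1 - 1/(n:ℝ) := by
      rw [sub_pos, div_lt_one hnpos]
      linarith
    have hbase1 : 1 - 1/(n:ℝ) ≤ 1 := by
      have : (0:ℝ) < 1/(n:ℝ) := by positivity
      linarith
    have hp0 : ∀ j : Fin n, (j : ℕ) < m → 0 ≤ p j := by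
      intro j hj
      by_cases hji : (j : ℕ) < (i : ℕ)
      · rw [hcrit j (Fin.lt_def.mpr hji)]
        linarith
      · have := hquarter j (Fin.le_def.mpr (by omega))
        linarith
    -- the product lower bound
    have hM' : (μ : ℝ) / (1 - δ) ≤
        (∏ j ∈ Finset.univ.filter fun j : Fin n => (j : ℕ) < m, min (p j) 1) * lam := by
      set F1 := Finset.univ.filter fun j : Fin n => (j : ℕ) < (i : ℕ) with hF1
      set F2 := Finset.univ.filter
        (fun j : Fin n => (i : ℕ) ≤ (j : ℕ) ∧ (j : ℕ) < m) with hF2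
      have hdisj : Disjoint F1 F2 := by
        apply Finset.disjoint_left.mpr
        intro j hj1 hj2
        simp only [hF1, hF2, Finset.mem_filter, Finset.mem_univ, true_and] at hj1 hj2
        omega
      have hunion : (Finset.univ.filter fun j : Fin n => (j : ℕ) < m) = F1 ∪ F2 := by
        ext j
        simp only [hF1, hF2, Finset.mem_union, Finset.mem_filter, Finset.mem_univ, true_and]
        omega
      have hcard1 : F1.card = (i : ℕ) := card_filter_val_lt _ (le_of_lt i.isLt)
      have hcardm : (Finset.univ.filter fun j : Fin n => (j : ℕ) < m).card = m :=
        card_filter_val_lt _ hmn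
      have hcard2 : F2.card ≤ d + 1 := by
        have := Finset.card_union_of_disjoint hdisj
        rw [← hunion, hcardm, hcard1] at this
        omega
      have hprod1 : ∏ j ∈ F1, min (p j) 1 = (1 - 1/(n:ℝ)) ^ (i : ℕ) := by
        rw [Finset.prod_congr rfl (fun j hj => ?_), Finset.prod_const, hcard1]
        simp only [hF1, Finset.mem_filter, Finset.mem_univ, true_and] at hj
        rw [hcrit j (Fin.lt_def.mpr hj), min_eq_left hbase1]
      have hprod2 : ((1:ℝ)/4) ^ (d + 1) ≤ ∏ j ∈ F2, min (p j) 1 := by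
        calc ((1:ℝ)/4) ^ (d + 1) ≤ ((1:ℝ)/4) ^ F2.card :=
              pow_le_pow_of_le_one (by norm_num) (by norm_num) hcard2
          _ = ∏ _j ∈ F2, ((1:ℝ)/4) := (Finset.prod_const _).symm
          _ ≤ ∏ j ∈ F2, min (p j) 1 := by
              apply Finset.prod_le_prod (fun _ _ => by norm_num)
              intro j hj
              simp only [hF2, Finset.mem_filter, Finset.mem_univ, true_and] at hj
              exact le_min (hquarter j (Fin.le_def.mpr hj.1)) (by norm_num)
      -- (1-1/n)^i ≥ exp(-1)
      have hn1 : (0:ℝ) < (n:ℝ) - 1 := by linarith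
      have hlogb : -(1/((n:ℝ)-1)) ≤ Real.log (1 - 1/(n:ℝ)) := by
        have hx : (1 - 1/(n:ℝ)) = (1 + 1/((n:ℝ)-1))⁻¹ := by
          field_simp
          ring
        rw [hx, Real.log_inv]
        have h2 : Real.log (1 + 1/((n:ℝ)-1)) ≤ 1/((n:ℝ)-1) := by
          have := Real.log_le_sub_one_of_pos
            (show (0:ℝ) < 1 + 1/((n:ℝ)-1) by positivity)
          linarith
        linarith
      have hpowe : Real.exp (-1) ≤ (1 - 1/(n:ℝ)) ^ (i : ℕ) := by
        rw [← Real.exp_log hbase, ← Real.exp_nat_mul]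
        apply Real.exp_le_exp.mpr
        have hL0 : Real.log (1 - 1/(n:ℝ)) ≤ 0 :=
          Real.log_nonpos (le_of_lt hbase) hbase1
        have hival : ((i : ℕ) : ℝ) ≤ (n:ℝ) - 1 := by
          have h := i.isLt
          have : ((i : ℕ) : ℝ) ≤ (n:ℝ) - 1 ↔ ((i : ℕ) : ℝ) + 1 ≤ (n:ℝ) := by constructor <;> intro <;> linarith
          rw [this]
          exact_mod_cast h
        have hstep1 : ((n:ℝ)-1) * Real.log (1 - 1/(n:ℝ)) ≤
            ((i : ℕ) : ℝ) * Real.log (1 - 1/(n:ℝ)) :=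
          mul_le_mul_of_nonpos_right hival hL0
        have hstep2 : ((n:ℝ)-1) * (-(1/((n:ℝ)-1))) ≤
            ((n:ℝ)-1) * Real.log (1 - 1/(n:ℝ)) :=
          mul_le_mul_of_nonneg_left hlogb (le_of_lt hn1)
        have hfe : ((n:ℝ)-1) * (-(1/((n:ℝ)-1))) = -1 := by
          field_simp
        linarith
      -- combine
      have hQ : Real.exp (-1) * ((1:ℝ)/4) ^ (d + 1) ≤
          ∏ j ∈ Finset.univ.filter fun j : Fin n => (j : ℕ) < m, min (p j) 1 := by
        rw [hunion, Finset.prod_union hdisj, hprod1]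
        apply mul_le_mul hpowe hprod2 (by positivity) (by positivity)
      have h4d : (0:ℝ) < (4:ℝ) ^ d := by positivity
      have hkey : (μ:ℝ) * (4:ℝ) ^ d ≤ (1 - δ) / (4 * Real.exp 1) * lam := by
        have h := (le_div_iff₀ hμR).mp hd4
        linarith [h]
      have hfinal : (μ:ℝ) / (1 - δ) ≤ Real.exp (-1) * ((1:ℝ)/4) ^ (d + 1) * lam := by
        rw [div_le_iff₀ hδ1']
        have hident : Real.exp (-1) * ((1:ℝ)/4) ^ (d + 1) * lam * (1 - δ)
            = ((1 - δ) / (4 * Real.exp 1) * lam) * ((4:ℝ) ^ d)⁻¹ := by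
          rw [Real.exp_neg, pow_succ, one_div, inv_pow]
          field_simp
        rw [hident]
        rw [← sub_nonneg]
        have expand : (1 - δ) / (4 * Real.exp 1) * ↑lam * ((4:ℝ) ^ d)⁻¹ - (μ:ℝ)
            = ((1 - δ) / (4 * Real.exp 1) * ↑lam - (μ:ℝ) * (4:ℝ) ^ d) * ((4:ℝ) ^ d)⁻¹ := by
          field_simp
        rw [expand]
        exact mul_nonneg (by linarith [hkey]) (inv_nonneg.mpr (le_of_lt h4d))
      calc (μ:ℝ) / (1 - δ) ≤ Real.exp (-1) * ((1:ℝ)/4) ^ (d + 1) * lam := hfinal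
        _ ≤ (∏ j ∈ Finset.univ.filter fun j : Fin n => (j : ℕ) < m, min (p j) 1) * lam :=
            mul_le_mul_of_nonneg_right hQ (Nat.cast_nonneg lam)
    exact core_bound n lam μ hn hμ1 hμlam δ hδ0 hδ1 hμ m hmn p hp0 hM'
  -- put everything together
  have hPAE : ENNReal.ofReal (1 - 1 / (n : ℝ) ^ 2) * ℙ A ≤ ℙ (A ∩ E) := by
    rw [hAE, ← Measure.map_apply hpairmeas hCmeas, hmap, Measure.prod_apply hCmeas]
    have hpt : ∀ p : Fin n → ℝ,
        SA.indicator (fun _ => ENNReal.ofReal (1 - 1 / (n : ℝ) ^ 2)) p ≤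
          stepLaw n lam (Prod.mk p ⁻¹' ((SA ×ˢ (Set.univ : Set ((Fin lam → Fin n → ℝ) ×
            Equiv.Perm (Fin lam)))) ∩ W)) := by
      intro p
      by_cases hp : p ∈ SA
      · rw [Set.indicator_of_mem hp]
        exact hslice p hp
      · rw [Set.indicator_of_notMem hp]
        exact zero_le
    calc ENNReal.ofReal (1 - 1 / (n : ℝ) ^ 2) * ℙ A
        = ENNReal.ofReal (1 - 1 / (n : ℝ) ^ 2) *
            (Measure.map (freq (lo n) μ M.step t) ℙ) SA := by
          rw [Measure.map_apply (hfreqmeas t) hSAmeas, ← hApre]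
      _ = ∫⁻ p, SA.indicator (fun _ => ENNReal.ofReal (1 - 1 / (n : ℝ) ^ 2)) p
            ∂(Measure.map (freq (lo n) μ M.step t) ℙ) := by
          rw [lintegral_indicator_const hSAmeas]
      _ ≤ ∫⁻ p, stepLaw n lam (Prod.mk p ⁻¹' ((SA ×ˢ (Set.univ :
            Set ((Fin lam → Fin n → ℝ) × Equiv.Perm (Fin lam)))) ∩ W))
            ∂(Measure.map (freq (lo n) μ M.step t) ℙ) :=
          lintegral_mono hpt
  show ENNReal.ofReal (1 - 1 / (n : ℝ) ^ 2) ≤ ℙ[E | A]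
  rw [ProbabilityTheory.cond_apply hAmeas]
  calc ENNReal.ofReal (1 - 1 / (n : ℝ) ^ 2)
      = (ℙ A)⁻¹ * (ENNReal.ofReal (1 - 1 / (n : ℝ) ^ 2) * ℙ A) := by
        rw [mul_comm (ENNReal.ofReal _) (ℙ A), ← mul_assoc,
          ENNReal.inv_mul_cancel hA0 (measure_ne_top ℙ A), one_mul]
    _ ≤ (ℙ A)⁻¹ * ℙ (A ∩ E) := mul_le_mul_right hPAE _
end
end

section
/- Let n ≥ 2, let δ ∈ (0, 1) be a constant, and set ζ = (3/4)(1 + δ). Consider the UMDA with parameters μ and λ optimizing LeadingOnes on {0,1}^n, where μ ≥ 6·((1 + δ)/δ²)·ln n and λ ≥ μ·max{1, 1/ζ}. Let d = ⌈log_{4/3}(ζ λ/μ)⌉. Consider an iteration t such that position i ∈ [n] is critical and such that p_j^(t) ≤ 3/4 for all positions j > i. Then, with probability at least 1 − 1/n², the maximum selection-relevant position in iteration t is at most min{n, i + d + 1}. -/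
/-!
Formalization of the UMDA (univariate marginal distribution algorithm) with parameters
`μ ≤ lam` maximizing a fitness function `f : (Fin n → Bool) → ℝ`.

The algorithm is modeled as a deterministic function of driving randomness: in each
iteration `t`, the fresh randomness `step t` consists of `lam · n` independent uniform
random numbers in `[0,1]` (the population is sampled from the current frequency vector
by thresholding these uniforms, so that each bit is `1` with probability equal to the
corresponding frequency, independently) together with an independent uniformly random
permutation of `Fin lam` that is used to break ties in the selection of the `μ` best
individuals uniformly at random.  The randomness of different iterations is independent.

Positions: we index positions by `Fin n` (0-based), so `i : Fin n` represents the
(1-based) position `i + 1 ∈ [n]` of the paper.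
-/

open MeasureTheory ProbabilityTheory
open scoped ENNReal

noncomputable section

open UMDA

section Auxiliary

open Real

instance isProbability_unif01 : IsProbabilityMeasure unif01 := by
  constructor
  rw [unif01, Measure.restrict_apply_univ, Real.volume_Icc]
  norm_num

lemma unif01_Iio_le (x : ℝ) : unif01 (Set.Iio x) ≤ ENNReal.ofReal x := by
  rw [unif01, Measure.restrict_apply measurableSet_Iio]
  refine le_trans (measure_mono (t := Set.Icc 0 x)
    (fun v hv => Set.mem_Icc.2 ⟨hv.2.1, le_of_lt hv.1⟩)) ?_
  rw [Real.volume_Icc]; simp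

lemma lintegral_pi_pow {α : Type*} [MeasurableSpace α] (ν : Measure α) [IsProbabilityMeasure ν]
    (g : α → ℝ≥0∞) (hg : Measurable g) (m : ℕ) :
    ∫⁻ x : Fin m → α, ∏ k, g (x k) ∂(Measure.pi fun _ => ν) = (∫⁻ x, g x ∂ν) ^ m := by
  induction m with
  | zero => simp
  | succ m ih =>
    rw [← ((measurePreserving_piFinSuccAbove (fun _ : Fin (m+1) => ν) 0).symm).lintegral_comp_emb
      (MeasurableEquiv.measurableEmbedding _)]
    simp_rw [MeasurableEquiv.piFinSuccAbove_symm_apply, Fin.insertNthEquiv,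
      Fin.prod_univ_succ, Fin.insertNth_zero, Equiv.coe_fn_mk, Fin.cons_zero, Fin.cons_succ,
      cast_eq]
    have key := lintegral_prod_mul (μ := ν) (ν := Measure.pi fun _ : Fin m => ν)
      hg.aemeasurable
      (g := fun y : Fin m → α => ∏ k, g (y k))
      (Finset.measurable_prod _ fun k _ => hg.comp (measurable_pi_apply k)).aemeasurable
    rw [show (∫⁻ (a : α × (Fin m → α)), g a.1 * ∏ x : Fin m, g (a.2 x)
        ∂ν.prod (Measure.pi fun _ => ν)) = _ from key, ih, pow_succ, mul_comm]

open Classical in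
lemma leadingOnes_ge {n : ℕ} {x : Fin n → Bool} {m : ℕ} (h : m ≤ leadingOnes x)
    {j : Fin n} (hj : (j : ℕ) < m) : x j = true := by
  by_contra hx
  have hsub : (Finset.univ.filter fun i : Fin n => ∀ j' : Fin n, j' ≤ i → x j' = true)
      ⊆ Finset.Iio j := by
    intro a ha
    rw [Finset.mem_filter] at ha
    rw [Finset.mem_Iio]
    by_contra hja
    exact hx (ha.2 j (le_of_not_gt hja))
  have hcard := Finset.card_le_card hsub
  rw [Fin.card_Iio] at hcard
  have : m ≤ (j : ℕ) := le_trans h (by simpa [leadingOnes] using hcard)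
  omega

instance permMeasurableSingleton (lam : ℕ) :
    MeasurableSingletonClass (Equiv.Perm (Fin lam)) := ⟨fun _ => trivial⟩

example (n lam : ℕ) : DiscreteMeasurableSpace ((Fin lam → Fin n → Bool) × Equiv.Perm (Fin lam)) :=
  inferInstance

lemma measurable_sampleMap {n lam : ℕ} :
    Measurable (fun q : (Fin n → ℝ) × (Fin lam → Fin n → ℝ) => sample q.1 q.2) := by
  refine measurable_pi_lambda _ fun k => measurable_pi_lambda _ fun i' => ?_
  have : (fun q : (Fin n → ℝ) × (Fin lam → Fin n → ℝ) => sample q.1 q.2 k i')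
      = fun q => if q.2 k i' < q.1 i' then true else false := by
    funext q
    by_cases h : q.2 k i' < q.1 i' <;> simp [sample, h]
  rw [this]
  exact Measurable.ite
    (measurableSet_lt (measurable_snd.eval.eval) (measurable_fst.eval))
    measurable_const measurable_const

/-- `freq` as a function of the randomness of the first `t` iterations. -/
def freqAux {n lam : ℕ} (f : (Fin n → Bool) → ℝ) (μ : ℕ) :
    (t : ℕ) → (Fin t → (Fin lam → Fin n → ℝ) × Equiv.Perm (Fin lam)) → Fin n → ℝ
  | 0, _ => fun _ => 1 / 2
  | t + 1, e => update f μ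
      (sample (freqAux f μ t fun j => e j.castSucc) (e (Fin.last t)).1) (e (Fin.last t)).2

set_option maxHeartbeats 400000 in
lemma measurable_freqAux {n lam : ℕ} (f : (Fin n → Bool) → ℝ) (μ : ℕ) (t : ℕ) :
    Measurable (freqAux (lam := lam) f μ t) := by
  induction t with
  | zero => exact measurable_const
  | succ t ih =>
    have h1 : Measurable (fun e : Fin (t+1) → (Fin lam → Fin n → ℝ) × Equiv.Perm (Fin lam) =>
        (sample (freqAux f μ t fun j => e j.castSucc) (e (Fin.last t)).1, (e (Fin.last t)).2)) := by
      refine Measurable.prodMk (measurable_sampleMap.comp (Measurable.prodMk ?_ ?_)) ?_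
      · exact ih.comp (measurable_pi_lambda _ fun j => measurable_pi_apply j.castSucc)
      · exact measurable_fst.comp (measurable_pi_apply _)
      · exact measurable_snd.comp (measurable_pi_apply _)
    have h2 : Measurable (fun q : (Fin lam → Fin n → Bool) × Equiv.Perm (Fin lam) =>
        update f μ q.1 q.2) := Measurable.of_discrete
    have h3 := h2.comp h1
    simpa [freqAux, Function.comp_def] using h3

lemma freq_eq_freqAux {n lam : ℕ} {Ω : Type*} (f : (Fin n → Bool) → ℝ) (μ : ℕ)
    (step : ℕ → Ω → (Fin lam → Fin n → ℝ) × Equiv.Perm (Fin lam)) (t : ℕ) (ω : Ω) :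
    freq f μ step t ω = freqAux f μ t (fun j : Fin t => step (j : ℕ) ω) := by
  induction t with
  | zero => rfl
  | succ t ih => simp [freq, freqAux, ih, Fin.val_last, Fin.coe_castSucc]

/-- Chernoff-type bound for the number of successes in a product measure. -/
lemma chernoff_pi {α : Type*} [MeasurableSpace α] (ν : Measure α) [IsProbabilityMeasure ν]
    (lam μ : ℕ) (F : Set α) [DecidablePred (· ∈ F)] (hF : MeasurableSet F) (q s : ℝ) (hs : 0 ≤ s) (hq0 : 0 ≤ q)
    (hq : ν F ≤ ENNReal.ofReal q) :
    (Measure.pi fun _ : Fin lam => ν)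
      {u : Fin lam → α | μ ≤ (Finset.univ.filter fun k => u k ∈ F).card} ≤
      ENNReal.ofReal (Real.exp ((lam : ℝ) * ((Real.exp s - 1) * q) - s * μ)) := by
  set c : ℝ≥0∞ := ENNReal.ofReal (Real.exp s) with hc
  have hc1 : 1 ≤ c := by
    rw [hc, ← ENNReal.ofReal_one]
    exact ENNReal.ofReal_le_ofReal (Real.one_le_exp hs)
  have hcne : c ≠ ⊤ := ENNReal.ofReal_ne_top
  set g : α → ℝ≥0∞ := fun v => if v ∈ F then c else 1 with hgdef
  have hg : Measurable g := Measurable.ite hF measurable_const measurable_const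
  have hg1 : ∀ v, 1 ≤ g v := by
    intro v; rw [hgdef]; dsimp only; split
    · exact hc1
    · exact le_refl 1
  -- the per-coordinate integral
  have hrow : ∫⁻ v, g v ∂ν ≤ ENNReal.ofReal (Real.exp ((Real.exp s - 1) * q)) := by
    have hgeq : g = fun v => F.indicator (fun _ => c - 1) v + 1 := by
      funext v
      rw [hgdef]; dsimp only
      by_cases h : v ∈ F
      · rw [if_pos h, Set.indicator_of_mem h, tsub_add_cancel_of_le hc1]
      · rw [if_neg h, Set.indicator_of_notMem h, zero_add]
    rw [hgeq, lintegral_add_right _ measurable_const, lintegral_indicator_const hF,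
      lintegral_one, measure_univ]
    have h1 : c - 1 = ENNReal.ofReal (Real.exp s - 1) := by
      rw [ENNReal.ofReal_sub _ zero_le_one, ENNReal.ofReal_one, hc]
    calc (c - 1) * ν F + 1 ≤ ENNReal.ofReal (Real.exp s - 1) * ENNReal.ofReal q + 1 := by
          gcongr
          · rw [h1]
        _ = ENNReal.ofReal ((Real.exp s - 1) * q + 1) := by
          rw [ENNReal.ofReal_add (mul_nonneg (by simpa using Real.one_le_exp hs) hq0)
            zero_le_one, ENNReal.ofReal_mul (by simpa using Real.one_le_exp hs),
            ENNReal.ofReal_one]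
        _ ≤ ENNReal.ofReal (Real.exp ((Real.exp s - 1) * q)) := by
          apply ENNReal.ofReal_le_ofReal
          linarith [Real.add_one_le_exp ((Real.exp s - 1) * q)]
  -- Markov
  have hsubset : {u : Fin lam → α | μ ≤ (Finset.univ.filter fun k => u k ∈ F).card} ⊆
      {u : Fin lam → α | c ^ μ ≤ ∏ k, g (u k)} := by
    intro u hu
    have h1 : c ^ μ ≤ c ^ (Finset.univ.filter fun k => u k ∈ F).card :=
      pow_le_pow_right₀ hc1 hu
    have h2 : c ^ (Finset.univ.filter fun k => u k ∈ F).card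
        = ∏ k ∈ (Finset.univ.filter fun k => u k ∈ F), g (u k) := by
      rw [Finset.prod_congr rfl (fun k hk => ?_), Finset.prod_const]
      rw [Finset.mem_filter] at hk
      rw [hgdef]; dsimp only; rw [if_pos hk.2]
    have h3 : ∏ k ∈ (Finset.univ.filter fun k => u k ∈ F), g (u k) ≤ ∏ k, g (u k) :=
      Finset.prod_le_prod_of_subset_of_one_le' (Finset.filter_subset _ _)
        (fun k _ _ => hg1 (u k))
    exact le_trans h1 (le_trans (le_of_eq h2) h3)
  have hmeas : Measurable fun u : Fin lam → α => ∏ k, g (u k) :=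
    Finset.measurable_prod _ fun k _ => hg.comp (measurable_pi_apply k)
  have hcμ0 : c ^ μ ≠ 0 := pow_ne_zero μ (fun h => by simp [h] at hc1)
  have hcμtop : c ^ μ ≠ ⊤ := ENNReal.pow_ne_top hcne
  calc (Measure.pi fun _ : Fin lam => ν)
        {u : Fin lam → α | μ ≤ (Finset.univ.filter fun k => u k ∈ F).card}
      ≤ (Measure.pi fun _ : Fin lam => ν) {u : Fin lam → α | c ^ μ ≤ ∏ k, g (u k)} :=
        measure_mono hsubset
    _ ≤ (∫⁻ u, ∏ k, g (u k) ∂(Measure.pi fun _ : Fin lam => ν)) / c ^ μ :=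
        meas_ge_le_lintegral_div hmeas.aemeasurable hcμ0 hcμtop
    _ ≤ ENNReal.ofReal (Real.exp ((Real.exp s - 1) * q)) ^ lam / c ^ μ := by
        refine ENNReal.div_le_div_right ?_ _
        rw [lintegral_pi_pow ν g hg lam]
        exact pow_le_pow_left' hrow lam
    _ = ENNReal.ofReal (Real.exp ((lam : ℝ) * ((Real.exp s - 1) * q)))
        / ENNReal.ofReal (Real.exp (s * μ)) := by
        rw [← ENNReal.ofReal_pow (Real.exp_pos _).le, ← Real.exp_nat_mul, hc,
          ← ENNReal.ofReal_pow (Real.exp_pos _).le, ← Real.exp_nat_mul, mul_comm (μ : ℝ) s]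
    _ = ENNReal.ofReal (Real.exp ((lam : ℝ) * ((Real.exp s - 1) * q)) / Real.exp (s * μ)) := by
        rw [ENNReal.ofReal_div_of_pos (Real.exp_pos _)]
    _ = ENNReal.ofReal (Real.exp ((lam : ℝ) * ((Real.exp s - 1) * q) - s * μ)) := by
        rw [Real.exp_sub]

lemma q_bound (lam μ d : ℕ) (δ : ℝ) (hδ0 : 0 < δ) (hμpos : 0 < (μ : ℝ))
    (hμlam : (μ : ℝ) ≤ lam) (hd : Real.logb (4/3) (3/4*(1+δ)*lam/μ) ≤ (d : ℝ)) :
    (lam : ℝ) * (3/4)^(d+1) ≤ μ/(1+δ) := by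
  have hδ1' : (0:ℝ) < 1 + δ := by linarith
  have hlam0 : (0:ℝ) < lam := lt_of_lt_of_le hμpos hμlam
  have hr0 : (0:ℝ) < 3/4*(1+δ)*lam/μ := by positivity
  have h1 : 3/4*(1+δ)*(lam:ℝ)/μ ≤ (4/3 : ℝ)^d := by
    calc 3/4*(1+δ)*(lam:ℝ)/μ
        = (4/3 : ℝ) ^ Real.logb (4/3) (3/4*(1+δ)*lam/μ) :=
          (Real.rpow_logb (by norm_num) (by norm_num) hr0).symm
      _ ≤ (4/3 : ℝ) ^ (d : ℝ) := Real.rpow_le_rpow_of_exponent_le (by norm_num) hd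
      _ = (4/3 : ℝ) ^ d := Real.rpow_natCast _ d
  have key : 3/4*(1+δ)*(lam:ℝ) ≤ μ * (4/3 : ℝ)^d := by
    have h2 := mul_le_mul_of_nonneg_left h1 hμpos.le
    calc 3/4*(1+δ)*(lam:ℝ) = μ * (3/4*(1+δ)*lam/μ) := by field_simp
      _ ≤ μ * (4/3:ℝ)^d := h2
  have hprod : ((3:ℝ)/4)^d * (4/3)^d = 1 := by
    rw [← mul_pow]; norm_num
  rw [le_div_iff₀ hδ1']
  have h3 := mul_le_mul_of_nonneg_left key (pow_nonneg (by norm_num : (0:ℝ) ≤ 3/4) d)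
  calc (lam:ℝ) * (3/4)^(d+1) * (1+δ) = (3/4:ℝ)^d * (3/4*(1+δ)*lam) := by
        rw [pow_succ]; ring
    _ ≤ (3/4:ℝ)^d * (μ * (4/3)^d) := h3
    _ = (μ:ℝ) * ((3/4)^d * (4/3)^d) := by ring
    _ = μ := by rw [hprod, mul_one]

lemma exp_arith (n lam μ d : ℕ) (δ : ℝ) (hδ0 : 0 < δ) (hδ1 : δ < 1) (hn : 2 ≤ n)
    (hμ : 6*((1+δ)/δ^2)*Real.log n ≤ μ)
    (hq : (lam : ℝ) * (3/4)^(d+1) ≤ μ/(1+δ)) :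
    Real.exp ((lam : ℝ) * ((Real.exp (2*δ/3) - 1) * (3/4)^(d+1)) - (2*δ/3) * μ)
      ≤ 1/(n:ℝ)^2 := by
  have hδ1' : (0:ℝ) < 1 + δ := by linarith
  have hn1 : (1:ℝ) < (n:ℝ) := by exact_mod_cast (by omega : 1 < n)
  have hL : (0:ℝ) < Real.log n := Real.log_pos hn1
  have hμ0 : (0:ℝ) ≤ μ := Nat.cast_nonneg μ
  have hs0 : (0:ℝ) ≤ 2*δ/3 := by positivity
  have hs1 : 2*δ/3 ≤ 1 := by linarith
  have hexp : Real.exp (2*δ/3) ≤ 1 + (2*δ/3) + (2*δ/3)^2/2 + (2*δ/3)^3*(2/9) := by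
    have h := Real.exp_bound' hs0 hs1 (n := 3) (by norm_num)
    have hsum : (∑ m ∈ Finset.range 3, (2*δ/3)^m / m.factorial)
        = 1 + (2*δ/3) + (2*δ/3)^2/2 := by
      simp [Finset.sum_range_succ, Nat.factorial]
    rw [hsum] at h
    calc Real.exp (2*δ/3) ≤ 1 + (2*δ/3) + (2*δ/3)^2/2 + (2*δ/3)^3*(3+1)/((3:ℕ).factorial * 3) := h
      _ = 1 + (2*δ/3) + (2*δ/3)^2/2 + (2*δ/3)^3*(2/9) := by norm_num [Nat.factorial]; ring
  have hes : 0 ≤ Real.exp (2*δ/3) - 1 := by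
    have := Real.add_one_le_exp (2*δ/3); linarith
  have hδ2 : (0:ℝ) < δ^2 := by positivity
  have h6 : 6*(1+δ)*Real.log n ≤ (μ:ℝ)*δ^2 := by
    have h := mul_le_mul_of_nonneg_right hμ hδ2.le
    calc 6*(1+δ)*Real.log n = 6*((1+δ)/δ^2)*Real.log n * δ^2 := by field_simp
      _ ≤ μ*δ^2 := h
  -- scalar inequality
  have hscal : (Real.exp (2*δ/3) - 1) - (2*δ/3)*(1+δ) ≤ -(δ^2/3) := by
    nlinarith [hexp, mul_nonneg (mul_nonneg hδ0.le hδ0.le) (by linarith : (0:ℝ) ≤ 1 - δ),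
      hδ0.le, sq_nonneg δ]
  have hμδ : 2*Real.log n ≤ (μ:ℝ)/(1+δ)*(δ^2/3) := by
    rw [div_mul_eq_mul_div, le_div_iff₀ hδ1']
    linarith
  have h4 := mul_le_mul_of_nonneg_left hscal (div_nonneg hμ0 hδ1'.le)
  have h5 : (μ:ℝ)/(1+δ)*((2*δ/3)*(1+δ)) = (2*δ/3)*μ := by
    field_simp
  have h2 := mul_le_mul_of_nonneg_left hq hes
  have hmain : (lam : ℝ) * ((Real.exp (2*δ/3) - 1) * (3/4)^(d+1)) - (2*δ/3) * μ
      ≤ -(2*Real.log n) := by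
    nlinarith [h2, h4, hμδ, h5]
  calc Real.exp ((lam : ℝ) * ((Real.exp (2*δ/3) - 1) * (3/4)^(d+1)) - (2*δ/3) * μ)
      ≤ Real.exp (-(2*Real.log n)) := Real.exp_le_exp.mpr hmain
    _ = 1/(n:ℝ)^2 := by
      rw [show 2*Real.log n = Real.log ((n:ℝ)^2) by rw [Real.log_pow]; push_cast; ring,
        Real.exp_neg, Real.exp_log (by positivity)]
      rw [one_div]

end Auxiliary


/-- Lemma 4.3: let `δ ∈ (0,1)` and `ζ = (3/4)(1+δ)`; consider the
UMDA optimizing LeadingOnes with `μ ≥ 6((1+δ)/δ²) ln n` and `lam ≥ μ·max{1, 1/ζ}`, and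
let `d = ⌈log_{4/3}(ζ lam/μ)⌉`.  Consider an iteration `t` such that position `i` is
critical and all frequencies at positions `> i` are at most `3/4` (we condition on this
event `A`, assumed to have positive probability).  Then, with (conditional) probability
at least `1 - 1/n²`, every selection-relevant (1-based) position `k + 1` in iteration
`t` is at most `min{n, (i+1)+d+1}`; in particular the maximum selection-relevant
position is at most this value.  (`i : Fin n` is the 0-based index of the 1-based
position `i + 1 ∈ [n]`.) -/
theorem umda_selection_relevant_bound
    (n : ℕ) (hn : 2 ≤ n) (δ : ℝ) (hδ : δ ∈ Set.Ioo (0 : ℝ) 1)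
    (μ lam : ℕ) (hμlam : μ ≤ lam)
    (hμ : 6 * ((1 + δ) / δ ^ 2) * Real.log n ≤ μ)
    (hlam : (μ : ℝ) * max 1 (1 / (3 / 4 * (1 + δ))) ≤ lam)
    (Ω : Type) (_ : MeasureSpace Ω) (_ : IsProbabilityMeasure (ℙ : Measure Ω))
    (M : Model n lam Ω) (t : ℕ) (i : Fin n)
    (A : Set Ω)
    (hA : A = {ω : Ω | IsCritical (freq (lo n) μ M.step t ω) i ∧
        ∀ j : Fin n, i < j → freq (lo n) μ M.step t ω j ≤ 3 / 4})
    (hA0 : ℙ A ≠ 0) :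
    ENNReal.ofReal (1 - 1 / (n : ℝ) ^ 2) ≤
      ℙ[{ω : Ω | ∀ k : Fin n,
          SelectionRelevant μ (pop (lo n) μ M.step t ω) k →
            (k : ℕ) + 1 ≤
              min n ((i : ℕ) + 1 +
                ⌈Real.logb (4 / 3) (3 / 4 * (1 + δ) * lam / μ)⌉₊ + 1)} | A] := by
  classical
  obtain ⟨hδ0, hδ1⟩ := hδ
  have hδ1' : (0:ℝ) < 1 + δ := by linarith
  set dd : ℕ := ⌈Real.logb (4 / 3) (3 / 4 * (1 + δ) * lam / μ)⌉₊ with hdd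
  have hn1 : (1:ℝ) < (n:ℝ) := by exact_mod_cast (by omega : 1 < n)
  have hL : (0:ℝ) < Real.log n := Real.log_pos hn1
  have hμpos : (0:ℝ) < μ := lt_of_lt_of_le (mul_pos (by positivity) hL) hμ
  have hμlamR : (μ:ℝ) ≤ lam := by exact_mod_cast hμlam
  -- measurability of the frequency vector and the uniforms
  have hXm : Measurable (freq (lo n) μ M.step t) := by
    have h1 := (measurable_freqAux (lam := lam) (lo n) μ t).comp
      (measurable_pi_lambda (fun ω (j : Fin t) => M.step (j : ℕ) ω)
        fun j => M.measurable_step _)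
    have heq : (freq (lo n) μ M.step t)
        = fun ω => freqAux (lo n) μ t (fun j : Fin t => M.step (j : ℕ) ω) :=
      funext fun ω => freq_eq_freqAux _ _ _ _ _
    rw [heq]; exact h1
  set X : Ω → Fin n → ℝ := freq (lo n) μ M.step t with hX
  set Y : Ω → Fin lam → Fin n → ℝ := fun ω => (M.step t ω).1 with hY
  have hYm : Measurable Y := measurable_fst.comp (M.measurable_step t)
  set Afreq : Set (Fin n → ℝ) :=
    {p | IsCritical p i ∧ ∀ j : Fin n, i < j → p j ≤ 3/4} with hAfreq
  have hAfreqM : MeasurableSet Afreq := by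
    have : Afreq = ((⋂ (j : Fin n) (_ : j < i), {p : Fin n → ℝ | p j = 1 - (1:ℝ)/n}) ∩
        {p : Fin n → ℝ | p i < 1 - (1:ℝ)/n}) ∩
        ⋂ (j : Fin n) (_ : i < j), {p : Fin n → ℝ | p j ≤ 3/4} := by
      ext p
      simp only [hAfreq, IsCritical, Set.mem_setOf_eq, Set.mem_inter_iff, Set.mem_iInter]
    rw [this]
    refine MeasurableSet.inter (MeasurableSet.inter ?_ ?_) ?_
    · exact MeasurableSet.iInter fun j => MeasurableSet.iInter fun _ =>
        measurableSet_eq_fun (measurable_pi_apply j) measurable_const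
    · exact measurableSet_lt (measurable_pi_apply i) measurable_const
    · exact MeasurableSet.iInter fun j => MeasurableSet.iInter fun _ =>
        measurableSet_le (measurable_pi_apply j) measurable_const
  have hApre : A = X ⁻¹' Afreq := by rw [hA]; rfl
  have hAmeas : MeasurableSet A := by rw [hApre]; exact hXm hAfreqM
  have hAfin : ℙ A ≠ ⊤ := measure_ne_top _ _
  by_cases hcase : (i:ℕ) + 1 + dd + 1 < n
  · -- the nontrivial case
    set k₀ : Fin n := ⟨(i:ℕ) + 1 + dd + 1, hcase⟩ with hk₀
    set B : Set Ω := {ω | SelectionRelevant μ (pop (lo n) μ M.step t ω) k₀} with hB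
    have hpopm : Measurable (fun ω => sample (X ω) (Y ω)) :=
      measurable_sampleMap.comp (hXm.prodMk hYm)
    have hBmeas : MeasurableSet B := by
      have hBeq : B = (fun ω => sample (X ω) (Y ω)) ⁻¹'
          {x : Fin lam → Fin n → Bool | SelectionRelevant μ x k₀} := rfl
      rw [hBeq]; exact hpopm MeasurableSet.of_discrete
    have hsub : Bᶜ ⊆ {ω : Ω | ∀ k : Fin n,
        SelectionRelevant μ (pop (lo n) μ M.step t ω) k →
          (k : ℕ) + 1 ≤ min n ((i : ℕ) + 1 + dd + 1)} := by
      intro ω hω k hk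
      by_contra hcon
      push_neg at hcon
      apply hω
      have hk0k : (k₀ : ℕ) ≤ (k : ℕ) := by
        simp only [hk₀]
        have := k.isLt
        omega
      refine le_trans hk (Finset.card_le_card ?_)
      intro a ha
      rw [Finset.mem_filter] at ha ⊢
      exact ⟨ha.1, le_trans hk0k ha.2⟩
    refine le_trans ?_ (measure_mono hsub)
    -- the key probability bound
    have key : ℙ (A ∩ B) ≤ ENNReal.ofReal (1/(n:ℝ)^2) * ℙ A := by
      -- laws and independence
      have hYlaw : Measure.map Y ℙ
          = (Measure.pi fun _ : Fin lam => Measure.pi fun _ : Fin n => unif01) := by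
        have h1 : Y = Prod.fst ∘ M.step t := rfl
        rw [h1, ← Measure.map_map measurable_fst (M.measurable_step t), M.law_step t,
          stepLaw, Measure.map_fst_prod]
        simp
      have hindep : IndepFun X Y ℙ := by
        have hdisj : Disjoint (Finset.range t) ({t} : Finset ℕ) := by simp
        have h := M.indep_step.indepFun_finset (Finset.range t) {t} hdisj M.measurable_step
        have hg1 : Measurable (fun e : ↥(Finset.range t) →
            (Fin lam → Fin n → ℝ) × Equiv.Perm (Fin lam) =>
            freqAux (lo n) μ t (fun j : Fin t =>
              e ⟨(j : ℕ), by simp [Finset.mem_range, j.isLt]⟩)) :=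
          (measurable_freqAux _ _ _).comp
            (measurable_pi_lambda _ fun j =>
              measurable_pi_apply (⟨(j : ℕ), by simp [Finset.mem_range, j.isLt]⟩ : ↥(Finset.range t)))
        have hg2 : Measurable (fun e : ↥({t} : Finset ℕ) →
            (Fin lam → Fin n → ℝ) × Equiv.Perm (Fin lam) =>
            (e ⟨t, by simp⟩).1) :=
          measurable_fst.comp (measurable_pi_apply (⟨t, by simp⟩ : ↥({t} : Finset ℕ)))
        have h2 := h.comp hg1 hg2
        have e1 : ((fun e : ↥(Finset.range t) →
            (Fin lam → Fin n → ℝ) × Equiv.Perm (Fin lam) =>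
            freqAux (lo n) μ t (fun j : Fin t =>
              e ⟨(j : ℕ), by simp [Finset.mem_range, j.isLt]⟩))
            ∘ (fun a (i' : ↥(Finset.range t)) => M.step i' a)) = X := by
          funext ω
          exact (freq_eq_freqAux (lo n) μ M.step t ω).symm
        have e2 : ((fun e : ↥({t} : Finset ℕ) →
            (Fin lam → Fin n → ℝ) × Equiv.Perm (Fin lam) => (e ⟨t, by simp⟩).1)
            ∘ (fun a (i' : ↥({t} : Finset ℕ)) => M.step i' a)) = Y := rfl
        rwa [e1, e2] at h2
      have hjoint := (indepFun_iff_map_prod_eq_prod_map_map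
        hXm.aemeasurable hYm.aemeasurable).mp hindep
      set S : Set ((Fin n → ℝ) × (Fin lam → Fin n → ℝ)) :=
        {q | q.1 ∈ Afreq ∧ SelectionRelevant μ (sample q.1 q.2) k₀} with hS
      have hSmeas : MeasurableSet S := by
        have h1 : MeasurableSet {q : (Fin n → ℝ) × (Fin lam → Fin n → ℝ) | q.1 ∈ Afreq} :=
          hAfreqM.preimage measurable_fst
        have h2 : MeasurableSet {q : (Fin n → ℝ) × (Fin lam → Fin n → ℝ) |
            SelectionRelevant μ (sample q.1 q.2) k₀} :=
          measurable_sampleMap (MeasurableSet.of_discrete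
            (s := {x : Fin lam → Fin n → Bool | SelectionRelevant μ x k₀}))
        exact h1.inter h2
      have hABS : A ∩ B = (fun ω => (X ω, Y ω)) ⁻¹' S := by
        rw [hApre]; rfl
      -- the conditional bound for frozen frequencies
      have hilt : (i:ℕ) + dd + 1 < n := by omega
      set J : Finset (Fin n) := Finset.Ioc i ⟨(i:ℕ) + dd + 1, hilt⟩ with hJ
      have hJcard : J.card = dd + 1 := by
        rw [hJ, Fin.card_Ioc]
        simp
        omega
      have mainbound : ∀ p ∈ Afreq,
          (Measure.pi fun _ : Fin lam => Measure.pi fun _ : Fin n => unif01)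
            (Prod.mk p ⁻¹' S) ≤ ENNReal.ofReal (1/(n:ℝ)^2) := by
        intro p hp
        set F : Set (Fin n → ℝ) := {v | ∀ j ∈ J, v j < p j} with hF
        have hFmeas : MeasurableSet F := by
          have : F = ⋂ j ∈ J, {v : Fin n → ℝ | v j < p j} := by
            ext v; simp [hF]
          rw [this]
          exact MeasurableSet.biInter (J : Set (Fin n)).to_countable
            fun j _ => measurableSet_lt (measurable_pi_apply j) measurable_const
        have hsec : Prod.mk p ⁻¹' S ⊆
            {u : Fin lam → Fin n → ℝ | μ ≤ (Finset.univ.filter fun k => u k ∈ F).card} := by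
          intro u hu
          obtain ⟨-, hsel⟩ := hu
          refine le_trans hsel (Finset.card_le_card ?_)
          intro k hk
          rw [Finset.mem_filter] at hk ⊢
          refine ⟨hk.1, fun j hj => ?_⟩
          rw [hJ, Finset.mem_Ioc] at hj
          have hjlt : (j : ℕ) < (k₀ : ℕ) := by
            have h1 : (j : ℕ) ≤ (i:ℕ) + dd + 1 := hj.2
            simp only [hk₀]
            omega
          have hbit := leadingOnes_ge hk.2 hjlt
          exact of_decide_eq_true hbit
        refine le_trans (measure_mono hsec) ?_
        have hνF : (Measure.pi fun _ : Fin n => unif01) F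
            ≤ ENNReal.ofReal ((3/4:ℝ)^(dd+1)) := by
          have hsub2 : F ⊆ Set.pi Set.univ
              (fun j => if j ∈ J then Set.Iio (p j) else Set.univ) := by
            intro v hv j _
            dsimp only
            split
            · exact hv j ‹j ∈ J›
            · trivial
          refine le_trans (measure_mono hsub2) ?_
          rw [Measure.pi_pi]
          calc ∏ j, unif01 (if j ∈ J then Set.Iio (p j) else Set.univ)
              ≤ ∏ j, (if j ∈ J then ENNReal.ofReal (3/4) else 1) := by
                refine Finset.prod_le_prod' fun j _ => ?_
                by_cases hjJ : j ∈ J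
                · rw [if_pos hjJ, if_pos hjJ]
                  refine le_trans (unif01_Iio_le (p j)) (ENNReal.ofReal_le_ofReal ?_)
                  have : i < j := by
                    rw [hJ, Finset.mem_Ioc] at hjJ
                    exact hjJ.1
                  exact hp.2 j this
                · rw [if_neg hjJ, if_neg hjJ, measure_univ]
            _ = ENNReal.ofReal (3/4) ^ J.card := by
                rw [Finset.prod_ite_mem, Finset.univ_inter, Finset.prod_const]
            _ = ENNReal.ofReal ((3/4:ℝ)^(dd+1)) := by
                rw [hJcard, ← ENNReal.ofReal_pow (by norm_num)]
        have hchern := chernoff_pi (Measure.pi fun _ : Fin n => unif01) lam μ F hFmeas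
          ((3/4:ℝ)^(dd+1)) (2*δ/3) (by positivity) (by positivity) hνF
        refine le_trans hchern (ENNReal.ofReal_le_ofReal ?_)
        have hdval : Real.logb (4/3) (3/4*(1+δ)*lam/μ) ≤ (dd : ℝ) := Nat.le_ceil _
        have hq := q_bound lam μ dd δ hδ0 hμpos hμlamR hdval
        exact exp_arith n lam μ dd δ hδ0 hδ1 hn hμ hq
      -- put everything together
      calc ℙ (A ∩ B) = Measure.map (fun ω => (X ω, Y ω)) ℙ S := by
            rw [Measure.map_apply (hXm.prodMk hYm) hSmeas, hABS]
        _ = ((Measure.map X ℙ).prod (Measure.map Y ℙ)) S := by rw [hjoint]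
        _ = ∫⁻ p, (Measure.map Y ℙ) (Prod.mk p ⁻¹' S) ∂(Measure.map X ℙ) :=
            Measure.prod_apply hSmeas
        _ ≤ ∫⁻ p, Afreq.indicator (fun _ => ENNReal.ofReal (1/(n:ℝ)^2)) p
            ∂(Measure.map X ℙ) := by
            refine lintegral_mono fun p => ?_
            by_cases hp : p ∈ Afreq
            · rw [Set.indicator_of_mem hp, hYlaw]
              exact mainbound p hp
            · rw [Set.indicator_of_notMem hp]
              have hempty : Prod.mk p ⁻¹' S = ∅ := by
                ext u; simp [hS, hp]
              simp [hempty]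
        _ = ENNReal.ofReal (1/(n:ℝ)^2) * (Measure.map X ℙ) Afreq :=
            lintegral_indicator_const hAfreqM _
        _ = ENNReal.ofReal (1/(n:ℝ)^2) * ℙ A := by
            rw [Measure.map_apply hXm hAfreqM, ← hApre]
    -- conditional probability arithmetic
    rw [cond_apply hAmeas]
    have hsplit : ℙ (A ∩ Bᶜ) = ℙ A - ℙ (A ∩ B) := by
      have h1 : A ∩ Bᶜ = A \ (A ∩ B) := by
        rw [Set.diff_self_inter, Set.diff_eq]
      rw [h1]
      exact measure_diff Set.inter_subset_left (hAmeas.inter hBmeas).nullMeasurableSet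
        (measure_ne_top _ _)
    rw [hsplit]
    have hofsum : ENNReal.ofReal (1 - 1/(n:ℝ)^2) * ℙ A + ENNReal.ofReal (1/(n:ℝ)^2) * ℙ A
        = ℙ A := by
      rw [← add_mul, ← ENNReal.ofReal_add (by
        rw [sub_nonneg, div_le_one (by positivity)]
        nlinarith [hn1]) (by positivity)]
      norm_num
    have h2 : ENNReal.ofReal (1 - 1/(n:ℝ)^2) * ℙ A ≤ ℙ A - ℙ (A ∩ B) := by
      have hx := ENNReal.eq_sub_of_add_eq
        (ENNReal.mul_ne_top ENNReal.ofReal_ne_top hAfin) hofsum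
      exact le_trans (le_of_eq hx) (tsub_le_tsub_left key _)
    calc ENNReal.ofReal (1 - 1/(n:ℝ)^2)
        = ENNReal.ofReal (1 - 1/(n:ℝ)^2) * ((ℙ A)⁻¹ * ℙ A) := by
          rw [ENNReal.inv_mul_cancel hA0 hAfin, mul_one]
      _ = (ℙ A)⁻¹ * (ENNReal.ofReal (1 - 1/(n:ℝ)^2) * ℙ A) := by ring
      _ ≤ (ℙ A)⁻¹ * (ℙ A - ℙ (A ∩ B)) := mul_le_mul_right h2 _
  · -- the trivial case: the position bound holds always
    have hset : {ω : Ω | ∀ k : Fin n,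
        SelectionRelevant μ (pop (lo n) μ M.step t ω) k →
          (k : ℕ) + 1 ≤ min n ((i : ℕ) + 1 + dd + 1)} = Set.univ := by
      ext ω
      simp only [Set.mem_setOf_eq, Set.mem_univ, iff_true]
      intro k _
      have := k.isLt
      omega
    rw [hset, cond_apply hAmeas, Set.inter_univ, ENNReal.inv_mul_cancel hA0 hAfin]
    refine ENNReal.ofReal_le_one.mpr ?_
    have : (0:ℝ) ≤ 1/(n:ℝ)^2 := by positivity
    linarith
end
end
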